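/- If a chemical reaction network satisfying Assumptions 1 and 2 consists of exactly N connected components, the i-th being Y_i+S_{i,0} ⇄ U_{i,1} → Y_i+S_{i,1} ⇄ ⋯ ⇄ U_{i,L_i} → Y_i+S_{i,L_i} (with rate constants a_{i,j}, b_{i,j}, c_{i,j}), then the associated mass-action system is identifiable from the variables s_{1,L_1},…,s_{N,L_N} corresponding to the last products of the components; moreover, for every 1 ≤ i ≤ N, the order of derivation needed for the variable s_{i,L_i} is at most max{2, 2L_i−1}: the injectivity condition holds using s_{i,L_i}^{(ℓ)} for 1 ≤ ℓ ≤ max{2, 2L_i−1} for each i. -/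

import Mathlib

open MvPolynomial Finsupp

set_option linter.unusedSectionVars false
set_option linter.dupNamespace false
set_option maxHeartbeats 1000000

variable {σ : Type*}

/-- The total (Lie) derivative of a polynomial `φ` associated to the polynomial vector
field `f`: `φ̇ = Σ_x (∂φ/∂x)·f x`. -/
noncomputable def lieD [Fintype σ] (f : σ → MvPolynomial σ ℝ)
    (φ : MvPolynomial σ ℝ) : MvPolynomial σ ℝ :=
  ∑ x : σ, MvPolynomial.pderiv x φ * f x

/-- Iterated total (Lie) derivative. -/
noncomputable def lieDIter [Fintype σ] (f : σ → MvPolynomial σ ℝ) :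
    ℕ → MvPolynomial σ ℝ → MvPolynomial σ ℝ
  | 0, φ => φ
  | n + 1, φ => lieD f (lieDIter f n φ)

/-- Indicator of a species inside a complex, as a real number. -/
def ind [DecidableEq σ] (a x : σ) : ℝ := if a = x then 1 else 0

/-- A chemical reaction network of the structural form of Assumption 1: the connected
components are indexed by `ι`; component `i` is
`Y i + S i 0 ⇄ U i 1 → Y i + S i 1 ⇄ U i 2 → ⋯ ⇄ U i (L i) → Y i + S i (L i)`,
with rate constants `a_{i,j}, b_{i,j}, c_{i,j}` for the reactions
`Y i + S i (j-1) → U i j`, `U i j → Y i + S i (j-1)`, `U i j → Y i + S i j`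
(`1 ≤ j ≤ L i`). Only the values `S i j` for `j ≤ L i` and `U i j` for
`1 ≤ j ≤ L i` are relevant. -/
structure A1Network (σ : Type*) where
  ι : Type
  [fintypeι : Fintype ι]
  L : ι → ℕ
  Lpos : ∀ i, 1 ≤ L i
  Y : ι → σ
  S : ι → ℕ → σ
  U : ι → ℕ → σ

attribute [instance] A1Network.fintypeι

namespace A1Network

variable [Fintype σ] [DecidableEq σ]

/-- Rate-constant index: component `i`, block `j+1` (for `j : Fin (L i)`), and
`0, 1, 2` for the constants `a, b, c` of the block. -/
def Param (N : A1Network σ) : Type := (i : N.ι) × Fin (N.L i) × Fin 3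

instance (N : A1Network σ) : Fintype N.Param :=
  inferInstanceAs (Fintype ((i : N.ι) × Fin (N.L i) × Fin 3))

/-- `x` is an intermediate species of the network. -/
def inter (N : A1Network σ) (x : σ) : Prop :=
  ∃ i, ∃ j : Fin (N.L i), x = N.U i ((j : ℕ) + 1)

/-- The non-intermediate `x₁` reacts with the non-intermediate `x₂`
(a reaction `x₁ + x₂ → U` exists). -/
def reactsWith (N : A1Network σ) (x₁ x₂ : σ) : Prop :=
  ∃ i, ∃ j : Fin (N.L i),
    (x₁ = N.Y i ∧ x₂ = N.S i (j : ℕ)) ∨ (x₂ = N.Y i ∧ x₁ = N.S i (j : ℕ))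

/-- The intermediate `u` reacts to the non-intermediate `x`
(a reaction `u → x + X₂` exists). -/
def reactsTo (N : A1Network σ) (u x : σ) : Prop :=
  ∃ i, ∃ j : Fin (N.L i), u = N.U i ((j : ℕ) + 1) ∧
    (x = N.Y i ∨ x = N.S i (j : ℕ) ∨ x = N.S i ((j : ℕ) + 1))

/-- The distinctness/uniqueness requirements of Assumption 1: the intermediates of the
entire network are pairwise distinct and distinct from all non-intermediates; the
non-intermediates of one component are pairwise distinct; each complex lies in a
unique connected component. -/
structure Assumption1 (N : A1Network σ) : Prop where
  U_inj : ∀ i (j : Fin (N.L i)) i' (j' : Fin (N.L i')),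
    N.U i ((j : ℕ) + 1) = N.U i' ((j' : ℕ) + 1) → i = i' ∧ (j : ℕ) = (j' : ℕ)
  U_ne_Y : ∀ i (j : Fin (N.L i)) i', N.U i ((j : ℕ) + 1) ≠ N.Y i'
  U_ne_S : ∀ i (j : Fin (N.L i)) i' j', j' ≤ N.L i' → N.U i ((j : ℕ) + 1) ≠ N.S i' j'
  S_inj : ∀ i j j', j ≤ N.L i → j' ≤ N.L i → N.S i j = N.S i j' → j = j'
  complex_unique : ∀ i i' j j', j ≤ N.L i → j' ≤ N.L i' →
    (∀ x : σ, ind (N.Y i) x + ind (N.S i j) x = ind (N.Y i') x + ind (N.S i' j') x) →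
    i = i'

/-- `part` is a partition of the species as in Assumption 2: intermediates form class `0`;
all the substrates and products of a component lie in one class `α ≥ 1` which contains
neither the enzyme of the component nor any intermediate. -/
def IsPartition (N : A1Network σ) (part : σ → ℕ) : Prop :=
  (∀ x, N.inter x → part x = 0) ∧
  (∀ i : N.ι, ∃ α, 1 ≤ α ∧ (∀ j, j ≤ N.L i → part (N.S i j) = α) ∧
    part (N.Y i) ≠ α ∧ part (N.Y i) ≠ 0)

/-- Assumption 2: there exists a partition as above. -/
def Assumption2 (N : A1Network σ) : Prop := ∃ part, N.IsPartition part

/-- The mass-action right-hand side of the induced dynamical system: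
`ẋ = Σ_{y→y'} k_{yy'} x^y (y'-y)`. -/
noncomputable def rhs (N : A1Network σ) (k : N.Param → ℝ) (x : σ) : MvPolynomial σ ℝ :=
  ∑ i : N.ι, ∑ j : Fin (N.L i),
    (C (k ⟨i, j, 0⟩ *
          (ind (N.U i ((j : ℕ) + 1)) x - ind (N.Y i) x - ind (N.S i (j : ℕ)) x)) *
        (X (N.Y i) * X (N.S i (j : ℕ)))
      + C (k ⟨i, j, 1⟩ *
          (ind (N.Y i) x + ind (N.S i (j : ℕ)) x - ind (N.U i ((j : ℕ) + 1)) x)) *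
        X (N.U i ((j : ℕ) + 1))
      + C (k ⟨i, j, 2⟩ *
          (ind (N.Y i) x + ind (N.S i ((j : ℕ) + 1)) x - ind (N.U i ((j : ℕ) + 1)) x)) *
        X (N.U i ((j : ℕ) + 1)))

/-- `x^{(ℓ)}(x, k)`: the `ℓ`-th iterated total derivative of the variable `x`. -/
noncomputable def deriv (N : A1Network σ) (k : N.Param → ℝ) (ℓ : ℕ) (x : σ) :
    MvPolynomial σ ℝ :=
  lieDIter (N.rhs k) ℓ (X x)


/-! ### Auxiliary infrastructure for the proof -/

theorem coeff_pderiv' (x : σ) (φ : MvPolynomial σ ℝ) (m : σ →₀ ℕ) :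
    coeff m (pderiv x φ) = (m x + 1 : ℝ) * coeff (m + Finsupp.single x 1) φ := by
  induction φ using MvPolynomial.induction_on' with
  | add p q hp hq => simp [map_add, coeff_add, hp, hq, mul_add]
  | monomial s a =>
    rw [pderiv_monomial, coeff_monomial, coeff_monomial]
    rcases eq_or_ne s (m + Finsupp.single x 1) with rfl | hne
    · have h1 : (m + Finsupp.single x 1) - Finsupp.single x 1 = m := by simp
      rw [if_pos rfl, if_pos h1, Finsupp.add_apply, Finsupp.single_apply, if_pos rfl]
      push_cast; ring
    · rw [if_neg hne, mul_zero]
      rcases eq_or_ne (s x) 0 with h0 | h0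
      · split <;> simp [h0]
      · have hsm : ¬ (s - Finsupp.single x 1 = m) := by
          intro h
          apply hne
          rw [← h]
          ext z
          rcases eq_or_ne z x with rfl | hz
          · simp [Nat.sub_add_cancel (Nat.one_le_iff_ne_zero.2 h0)]
          · simp [Finsupp.single_apply, Ne.symm hz]
        rw [if_neg hsm]

theorem lieD_fadd [Fintype σ] (f g : σ → MvPolynomial σ ℝ) (φ : MvPolynomial σ ℝ) :
    lieD (fun x => f x + g x) φ = lieD f φ + lieD g φ := by
  simp [lieD, mul_add, Finset.sum_add_distrib]

/-- The basic weight used to expand one Lie-derivative step in coefficients. -/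
noncomputable def wf [DecidableEq σ] (φ : MvPolynomial σ ℝ) (T v : σ →₀ ℕ) (z : σ) : ℝ :=
  (((T - v) z : ℕ) + 1 : ℝ) * coeff ((T - v) + Finsupp.single z 1) φ

theorem coeff_lieD_monofield {ιB : Type*} (B : Finset ιB)
    (v : ιB → (σ →₀ ℕ)) (c : ιB → σ → ℝ) (φ : MvPolynomial σ ℝ) (T : σ →₀ ℕ)
    (f : σ → MvPolynomial σ ℝ) (hf : ∀ x, f x = ∑ b ∈ B, monomial (v b) (c b x)) :
    coeff T (lieD f φ) =
      ∑ b ∈ B, if v b ≤ T then ∑ x : σ, c b x * wf φ T (v b) x else 0 := by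
  have step : ∀ x : σ, coeff T (pderiv x φ * f x)
      = ∑ b ∈ B, if v b ≤ T then c b x * wf φ T (v b) x else 0 := by
    intro x
    rw [hf x, Finset.mul_sum, coeff_sum]
    refine Finset.sum_congr rfl fun b _ => ?_
    rw [coeff_mul_monomial']
    split_ifs with h
    · rw [coeff_pderiv', wf]; ring
    · rfl
  rw [lieD, coeff_sum]
  simp_rw [step]
  rw [Finset.sum_comm]
  refine Finset.sum_congr rfl fun b _ => ?_
  split_ifs with h
  · rfl
  · simp

theorem ind_collapse (z : σ) (g : σ → ℝ) :
    ∑ x : σ, ind z x * g x = g z := by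
  rw [Finset.sum_eq_single z]
  · simp [ind]
  · intro b _ hb; simp [ind, Ne.symm hb]
  · intro h; exact absurd (Finset.mem_univ z) h

variable {N : A1Network σ}

/-- Monomial of a reactant/product complex `Y i + S i q`. -/
noncomputable def pairm [DecidableEq σ] (N : A1Network σ) (i : N.ι) (q : ℕ) : σ →₀ ℕ :=
  Finsupp.single (N.Y i) 1 + Finsupp.single (N.S i q) 1

/-- Monomial of an intermediate complex `U i j`. -/
noncomputable def intm [DecidableEq σ] (N : A1Network σ) (i : N.ι) (j : ℕ) : σ →₀ ℕ :=
  Finsupp.single (N.U i j) 1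

/-- Coefficient function of the complex `Y i + S i j` in the vector field. -/
noncomputable def acoef [DecidableEq σ] (N : A1Network σ) (k : N.Param → ℝ) (i : N.ι)
    (j : Fin (N.L i)) (x : σ) : ℝ :=
  k ⟨i, j, 0⟩ * (ind (N.U i ((j : ℕ) + 1)) x - ind (N.Y i) x - ind (N.S i (j : ℕ)) x)

/-- Coefficient function of the complex `U i (j+1)` in the vector field. -/
noncomputable def bcoef [DecidableEq σ] (N : A1Network σ) (k : N.Param → ℝ) (i : N.ι)
    (j : Fin (N.L i)) (x : σ) : ℝ :=
  k ⟨i, j, 1⟩ * (ind (N.Y i) x + ind (N.S i (j : ℕ)) x - ind (N.U i ((j : ℕ) + 1)) x)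
    + k ⟨i, j, 2⟩ * (ind (N.Y i) x + ind (N.S i ((j : ℕ) + 1)) x - ind (N.U i ((j : ℕ) + 1)) x)

/-- The part of the mass-action vector field coming from the component `i`. -/
noncomputable def rhs1 [Fintype σ] [DecidableEq σ] (N : A1Network σ) (k : N.Param → ℝ)
    (i : N.ι) (x : σ) : MvPolynomial σ ℝ :=
  ∑ j : Fin (N.L i),
    (monomial (N.pairm i (j : ℕ)) (N.acoef k i j x) + monomial (N.intm i ((j : ℕ) + 1)) (N.bcoef k i j x))

theorem rhs_eq_sum_rhs1 [Fintype σ] [DecidableEq σ] (N : A1Network σ) (k : N.Param → ℝ)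
    (x : σ) : N.rhs k x = ∑ i, N.rhs1 k i x := by
  rw [rhs]
  refine Finset.sum_congr rfl fun i _ => ?_
  rw [rhs1]
  refine Finset.sum_congr rfl fun j _ => ?_
  simp only [pairm, intm, acoef, bcoef, MvPolynomial.X, monomial_mul, one_mul, mul_one,
    C_mul_monomial]
  rw [add_assoc, ← map_add]



theorem collapse_sub3 (A : ℝ) (p q r : σ) (g : σ → ℝ) :
    ∑ x : σ, (A * (ind p x - ind q x - ind r x)) * g x = A * (g p - g q - g r) := by
  have h : ∀ x : σ, (A * (ind p x - ind q x - ind r x)) * g x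
      = A * (ind p x * g x) - A * (ind q x * g x) - A * (ind r x * g x) := fun x => by ring
  simp_rw [h, Finset.sum_sub_distrib, ← Finset.mul_sum, ind_collapse]
  ring

theorem collapse_add3 (A : ℝ) (p q r : σ) (g : σ → ℝ) :
    ∑ x : σ, (A * (ind p x + ind q x - ind r x)) * g x = A * (g p + g q - g r) := by
  have h : ∀ x : σ, (A * (ind p x + ind q x - ind r x)) * g x
      = A * (ind p x * g x) + A * (ind q x * g x) - A * (ind r x * g x) := fun x => by ring
  simp_rw [h]
  rw [Finset.sum_sub_distrib, Finset.sum_add_distrib, ← Finset.mul_sum, ← Finset.mul_sum,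
    ← Finset.mul_sum, ind_collapse, ind_collapse, ind_collapse]
  ring

theorem coeff_lieD_rhs1 (N : A1Network σ) (k : N.Param → ℝ)
    (i : N.ι) (φ : MvPolynomial σ ℝ) (T : σ →₀ ℕ) :
    coeff T (lieD (N.rhs1 k i) φ) = ∑ j : Fin (N.L i),
      ((if N.pairm i (j : ℕ) ≤ T then
          k ⟨i, j, 0⟩ * (wf φ T (N.pairm i (j : ℕ)) (N.U i ((j : ℕ) + 1))
            - wf φ T (N.pairm i (j : ℕ)) (N.Y i) - wf φ T (N.pairm i (j : ℕ)) (N.S i (j : ℕ)))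
        else 0)
      + (if N.intm i ((j : ℕ) + 1) ≤ T then
          (k ⟨i, j, 1⟩ * (wf φ T (N.intm i ((j : ℕ) + 1)) (N.Y i)
              + wf φ T (N.intm i ((j : ℕ) + 1)) (N.S i (j : ℕ))
              - wf φ T (N.intm i ((j : ℕ) + 1)) (N.U i ((j : ℕ) + 1)))
           + k ⟨i, j, 2⟩ * (wf φ T (N.intm i ((j : ℕ) + 1)) (N.Y i)
              + wf φ T (N.intm i ((j : ℕ) + 1)) (N.S i ((j : ℕ) + 1))
              - wf φ T (N.intm i ((j : ℕ) + 1)) (N.U i ((j : ℕ) + 1))))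
        else 0)) := by
  have hsplit : N.rhs1 k i = fun x =>
      (∑ j : Fin (N.L i), monomial (N.pairm i (j : ℕ)) (N.acoef k i j x))
      + (∑ j : Fin (N.L i), monomial (N.intm i ((j : ℕ) + 1)) (N.bcoef k i j x)) := by
    funext x
    rw [rhs1, Finset.sum_add_distrib]
  rw [hsplit, lieD_fadd, coeff_add,
    coeff_lieD_monofield Finset.univ (fun j : Fin (N.L i) => N.pairm i (j : ℕ))
      (fun j x => N.acoef k i j x) φ T _ (fun x => rfl),
    coeff_lieD_monofield Finset.univ (fun j : Fin (N.L i) => N.intm i ((j : ℕ) + 1))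
      (fun j x => N.bcoef k i j x) φ T _ (fun x => rfl),
    ← Finset.sum_add_distrib]
  refine Finset.sum_congr rfl fun j _ => ?_
  congr 1
  · split_ifs with h
    · exact collapse_sub3 _ _ _ _ _
    · rfl
  · split_ifs with h
    · have hx : ∀ x : σ, N.bcoef k i j x * wf φ T (N.intm i ((j : ℕ) + 1)) x
          = (k ⟨i, j, 1⟩ * (ind (N.Y i) x + ind (N.S i (j : ℕ)) x - ind (N.U i ((j : ℕ) + 1)) x))
              * wf φ T (N.intm i ((j : ℕ) + 1)) x
            + (k ⟨i, j, 2⟩ * (ind (N.Y i) x + ind (N.S i ((j : ℕ) + 1)) x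
                - ind (N.U i ((j : ℕ) + 1)) x)) * wf φ T (N.intm i ((j : ℕ) + 1)) x := by
        intro x; rw [bcoef]; ring
      simp_rw [hx]
      rw [Finset.sum_add_distrib, collapse_add3, collapse_add3]
    · rfl


theorem lieD_fsum {ι' : Type*} (s : Finset ι') (g : ι' → σ → MvPolynomial σ ℝ)
    (φ : MvPolynomial σ ℝ) :
    lieD (fun x => ∑ b ∈ s, g b x) φ = ∑ b ∈ s, lieD (g b) φ := by
  simp only [lieD, Finset.mul_sum]
  rw [Finset.sum_comm]

/-- The species of the component `i`. -/
def CV (N : A1Network σ) (i : N.ι) : Set σ :=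
  {x | x = N.Y i ∨ (∃ q ≤ N.L i, x = N.S i q) ∨ (∃ j : Fin (N.L i), x = N.U i ((j : ℕ) + 1))}

section Facts

variable {N : A1Network σ}

theorem y_ne_s {part : σ → ℕ} (hp : N.IsPartition part) (i : N.ι) (q : ℕ) (hq : q ≤ N.L i) : N.Y i ≠ N.S i q := by
  obtain ⟨α, _, hSα, hYα, _⟩ := hp.2 i
  intro h
  exact hYα (h ▸ hSα q hq)

theorem le_one_of_single_le {T : σ →₀ ℕ} {z : σ} (h : Finsupp.single z 1 ≤ T) :
    1 ≤ T z := by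
  simpa using (Finsupp.le_def.1 h) z

theorem pairm_le_parts {i : N.ι} {q : ℕ} {T : σ →₀ ℕ} (h : N.pairm i q ≤ T) :
    1 ≤ T (N.Y i) ∧ 1 ≤ T (N.S i q) := by
  have hY := (Finsupp.le_def.1 h) (N.Y i)
  have hS := (Finsupp.le_def.1 h) (N.S i q)
  simp only [pairm, Finsupp.add_apply, Finsupp.single_apply] at hY hS
  constructor <;> (split_ifs at hY hS <;> omega)

theorem mem_CV_of_one_le {i : N.ι} {T : σ →₀ ℕ} (hT : ∀ x ∈ T.support, x ∈ N.CV i)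
    {z : σ} (hz : 1 ≤ T z) : z ∈ N.CV i := by
  exact hT z (Finsupp.mem_support_iff.2 (by omega))

theorem foreign_pairm_not_le (h1 : N.Assumption1) {part : σ → ℕ} (hp : N.IsPartition part) {i i' : N.ι} (hne : i' ≠ i) (j' : Fin (N.L i'))
    {T : σ →₀ ℕ} (hT : ∀ x ∈ T.support, x ∈ N.CV i) : ¬ N.pairm i' (j' : ℕ) ≤ T := by
  intro hle
  obtain ⟨hY, hS⟩ := pairm_le_parts hle
  have hYCV := mem_CV_of_one_le hT hY
  have hSCV := mem_CV_of_one_le hT hS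
  have hj'L : (j' : ℕ) ≤ N.L i' := le_of_lt j'.2
  obtain ⟨αi, _, hSαi, hYαi, hY0i⟩ := hp.2 i
  obtain ⟨αi', _, hSαi', hYαi', hY0i'⟩ := hp.2 i'
  rcases hYCV with hYY | ⟨q, hq, hYS⟩ | ⟨j, hYU⟩
  · -- Y i' = Y i
    rcases hSCV with hSY | ⟨q, hq, hSS⟩ | ⟨j, hSU⟩
    · -- S i' j' = Y i = Y i'
      exact hYαi' ((hYY.trans hSY.symm) ▸ hSαi' _ hj'L)
    · -- S i' j' = S i q : complex_unique
      exact hne (h1.complex_unique i' i (j' : ℕ) q hj'L hq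
        (fun x => by rw [hYY, hSS]))
    · exact (h1.U_ne_S i j i' (j' : ℕ) hj'L) hSU.symm
  · -- Y i' = S i q
    rcases hSCV with hSY | ⟨q', hq', hSS⟩ | ⟨j, hSU⟩
    · -- S i' j' = Y i : swapped complex
      refine hne (h1.complex_unique i' i (j' : ℕ) q hj'L hq (fun x => ?_))
      rw [hYS, hSY, add_comm]
    · -- both are S i _ : partition contradiction
      have e1 : part (N.Y i') = αi := by rw [hYS]; exact hSαi q hq
      have e2 : αi' = αi := by rw [← hSαi' _ hj'L, hSS]; exact hSαi q' hq'
      exact hYαi' (e2 ▸ e1)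
    · exact (h1.U_ne_S i j i' (j' : ℕ) hj'L) hSU.symm
  · exact (h1.U_ne_Y i j i') hYU.symm

theorem foreign_intm_not_le (h1 : N.Assumption1) {i i' : N.ι} (hne : i' ≠ i) (j' : Fin (N.L i'))
    {T : σ →₀ ℕ} (hT : ∀ x ∈ T.support, x ∈ N.CV i) : ¬ N.intm i' ((j' : ℕ) + 1) ≤ T := by
  intro hle
  have hU : 1 ≤ T (N.U i' ((j' : ℕ) + 1)) := le_one_of_single_le hle
  rcases mem_CV_of_one_le hT hU with hY | ⟨q, hq, hS⟩ | ⟨j, hUU⟩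
  · exact (h1.U_ne_Y i' j' i) hY
  · exact (h1.U_ne_S i' j' i q hq) hS
  · exact hne (h1.U_inj i' j' i j hUU).1

theorem support_sub_subset {T v : σ →₀ ℕ} {x : σ} (hx : x ∈ (T - v).support) :
    x ∈ T.support := by
  simp only [Finsupp.mem_support_iff, Finsupp.tsub_apply] at hx ⊢
  omega

theorem wf_congr {φ₁ φ₂ : MvPolynomial σ ℝ} {i : N.ι} {T v : σ →₀ ℕ} {z : σ}
    (hT : ∀ x ∈ T.support, x ∈ N.CV i) (hz : z ∈ N.CV i)
    (h : ∀ M : σ →₀ ℕ, (∀ x ∈ M.support, x ∈ N.CV i) → coeff M φ₁ = coeff M φ₂) :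
    wf φ₁ T v z = wf φ₂ T v z := by
  rw [wf, wf, h]
  intro x hx
  rcases Finset.mem_union.1 (Finsupp.support_add hx) with hx | hx
  · exact hT x (support_sub_subset hx)
  · rcases Finset.mem_singleton.1 (Finsupp.support_single_subset hx) with rfl
    exact hz

theorem reduction (h1 : N.Assumption1) {part : σ → ℕ} (hp : N.IsPartition part) (k : N.Param → ℝ) (i : N.ι) (ℓ : ℕ) (φ0 : MvPolynomial σ ℝ)
    (T : σ →₀ ℕ) (hT : ∀ x ∈ T.support, x ∈ N.CV i) :
    coeff T (lieDIter (N.rhs k) ℓ φ0) = coeff T (lieDIter (N.rhs1 k i) ℓ φ0) := by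
  induction ℓ generalizing T with
  | zero => rfl
  | succ ℓ ih =>
    show coeff T (lieD (N.rhs k) (lieDIter (N.rhs k) ℓ φ0))
      = coeff T (lieD (N.rhs1 k i) (lieDIter (N.rhs1 k i) ℓ φ0))
    have hsum : N.rhs k = fun x => ∑ i', N.rhs1 k i' x := by
      funext x; exact N.rhs_eq_sum_rhs1 k x
    set Φf := lieDIter (N.rhs k) ℓ φ0 with hΦf
    set Φg := lieDIter (N.rhs1 k i) ℓ φ0 with hΦg
    rw [hsum, lieD_fsum, coeff_sum]
    rw [Finset.sum_eq_single i]
    · -- the component `i` itself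
      rw [coeff_lieD_rhs1, coeff_lieD_rhs1]
      refine Finset.sum_congr rfl fun j _ => ?_
      have hYCV : N.Y i ∈ N.CV i := Or.inl rfl
      have hSCV : N.S i (j : ℕ) ∈ N.CV i := Or.inr (Or.inl ⟨(j : ℕ), le_of_lt j.2, rfl⟩)
      have hS'CV : N.S i ((j : ℕ) + 1) ∈ N.CV i := Or.inr (Or.inl ⟨(j : ℕ) + 1, j.2, rfl⟩)
      have hUCV : N.U i ((j : ℕ) + 1) ∈ N.CV i := Or.inr (Or.inr ⟨j, rfl⟩)
      have hcg : ∀ z, z ∈ N.CV i → ∀ v : σ →₀ ℕ,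
          wf Φf T v z = wf Φg T v z :=
        fun z hz v => wf_congr hT hz ih
      congr 1
      · split_ifs with h
        · rw [hcg _ hYCV, hcg _ hSCV, hcg _ hUCV]
        · rfl
      · split_ifs with h
        · rw [hcg _ hYCV, hcg _ hSCV, hcg _ hS'CV, hcg _ hUCV]
        · rfl
    · -- foreign components contribute nothing
      intro i' _ hne
      rw [coeff_lieD_rhs1]
      refine Finset.sum_eq_zero fun j' _ => ?_
      rw [if_neg (foreign_pairm_not_le h1 hp hne j' hT),
        if_neg (foreign_intm_not_le h1 hne j' hT), add_zero]
    · intro h; exact absurd (Finset.mem_univ i) h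

end Facts


section Comp

variable {N : A1Network σ}

/-- The iterated Lie derivative of the last product along the component vector field. -/
noncomputable def PP (N : A1Network σ) (k : N.Param → ℝ) (i : N.ι) (ℓ : ℕ) :
    MvPolynomial σ ℝ :=
  lieDIter (N.rhs1 k i) ℓ (X (N.S i (N.L i)))

/-- weight of a species : `1` on the non-enzyme species of component `i`. -/
noncomputable def wA (N : A1Network σ) (i : N.ι) (x : σ) : ℕ :=
  (∑ t ∈ Finset.range (N.L i + 1), if x = N.S i t then 1 else 0)
    + (∑ t ∈ Finset.range (N.L i), if x = N.U i (t + 1) then 1 else 0)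

noncomputable def WA (N : A1Network σ) (i : N.ι) (T : σ →₀ ℕ) : ℕ :=
  T.sum fun x n => n * wA N i x

/-- height of a species inside the chain of component `i`. -/
noncomputable def phiv (N : A1Network σ) (i : N.ι) (x : σ) : ℤ :=
  (∑ t ∈ Finset.range (N.L i + 1), if x = N.S i t then 2 * ((N.L i : ℤ) - t) else 0)
    + (∑ t ∈ Finset.range (N.L i), if x = N.U i (t + 1) then 2 * ((N.L i : ℤ) - t) - 1 else 0)

noncomputable def PH (N : A1Network σ) (i : N.ι) (T : σ →₀ ℕ) : ℤ :=
  T.sum fun x n => n * phiv N i x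

theorem WA_add (i : N.ι) (T T' : σ →₀ ℕ) : WA N i (T + T') = WA N i T + WA N i T' :=
  Finsupp.sum_add_index' (fun _ => by simp) (fun _ _ _ => by ring)

theorem WA_single (i : N.ι) (z : σ) (n : ℕ) : WA N i (Finsupp.single z n) = n * wA N i z :=
  Finsupp.sum_single_index (by simp)

theorem PH_add (i : N.ι) (T T' : σ →₀ ℕ) : PH N i (T + T') = PH N i T + PH N i T' :=
  Finsupp.sum_add_index' (fun _ => by simp) (fun _ _ _ => by push_cast; ring)

theorem PH_single (i : N.ι) (z : σ) (n : ℕ) :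
    PH N i (Finsupp.single z n) = n * phiv N i z :=
  Finsupp.sum_single_index (by simp)

theorem sum_S_eq {β : Type*} [AddCommMonoid β] (h1 : N.Assumption1) (i : N.ι) {q : ℕ}
    (hq : q ≤ N.L i) (val : ℕ → β) :
    (∑ t ∈ Finset.range (N.L i + 1), if N.S i q = N.S i t then val t else 0) = val q := by
  rw [Finset.sum_eq_single q]
  · exact if_pos rfl
  · intro t ht hne
    exact if_neg fun h =>
      hne (h1.S_inj i q t hq (Nat.lt_succ_iff.1 (Finset.mem_range.1 ht)) h).symm
  · intro h
    exact absurd (Finset.mem_range.2 (Nat.lt_succ_of_le hq)) h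

theorem sum_S_U_eq {β : Type*} [AddCommMonoid β] (h1 : N.Assumption1) (i : N.ι) {q : ℕ}
    (hq : q ≤ N.L i) (val : ℕ → β) :
    (∑ t ∈ Finset.range (N.L i), if N.S i q = N.U i (t + 1) then val t else 0) = 0 :=
  Finset.sum_eq_zero fun t ht =>
    if_neg fun h => (h1.U_ne_S i ⟨t, Finset.mem_range.1 ht⟩ i q hq) h.symm

theorem sum_U_eq {β : Type*} [AddCommMonoid β] (h1 : N.Assumption1) (i : N.ι) {u : ℕ}
    (hu : u < N.L i) (val : ℕ → β) :
    (∑ t ∈ Finset.range (N.L i), if N.U i (u + 1) = N.U i (t + 1) then val t else 0) = val u := by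
  rw [Finset.sum_eq_single u]
  · exact if_pos rfl
  · intro t ht hne
    exact if_neg fun h => hne ((h1.U_inj i ⟨u, hu⟩ i ⟨t, Finset.mem_range.1 ht⟩ h).2).symm
  · intro h
    exact absurd (Finset.mem_range.2 hu) h

theorem sum_U_S_eq {β : Type*} [AddCommMonoid β] (h1 : N.Assumption1) (i : N.ι) {u : ℕ}
    (hu : u < N.L i) (val : ℕ → β) :
    (∑ t ∈ Finset.range (N.L i + 1), if N.U i (u + 1) = N.S i t then val t else 0) = 0 :=
  Finset.sum_eq_zero fun t ht =>
    if_neg (h1.U_ne_S i ⟨u, hu⟩ i t (Nat.lt_succ_iff.1 (Finset.mem_range.1 ht)))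

theorem sum_Y_S_eq {β : Type*} [AddCommMonoid β] {part : σ → ℕ} (hp : N.IsPartition part)
    (i : N.ι) (val : ℕ → β) :
    (∑ t ∈ Finset.range (N.L i + 1), if N.Y i = N.S i t then val t else 0) = 0 :=
  Finset.sum_eq_zero fun t ht =>
    if_neg (y_ne_s hp i t (Nat.lt_succ_iff.1 (Finset.mem_range.1 ht)))

theorem sum_Y_U_eq {β : Type*} [AddCommMonoid β] (h1 : N.Assumption1) (i : N.ι)
    (val : ℕ → β) :
    (∑ t ∈ Finset.range (N.L i), if N.Y i = N.U i (t + 1) then val t else 0) = 0 :=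
  Finset.sum_eq_zero fun t ht =>
    if_neg fun h => (h1.U_ne_Y i ⟨t, Finset.mem_range.1 ht⟩ i) h.symm

theorem wA_S (h1 : N.Assumption1) (i : N.ι) {q : ℕ} (hq : q ≤ N.L i) :
    wA N i (N.S i q) = 1 := by
  rw [wA, sum_S_eq h1 i hq (fun _ => 1), sum_S_U_eq h1 i hq (fun _ => 1)]
  rfl

theorem wA_U (h1 : N.Assumption1) (i : N.ι) {t : ℕ} (ht : t < N.L i) :
    wA N i (N.U i (t + 1)) = 1 := by
  rw [wA, sum_U_S_eq h1 i ht (fun _ => 1), sum_U_eq h1 i ht (fun _ => 1)]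

theorem wA_Y (h1 : N.Assumption1) {part : σ → ℕ} (hp : N.IsPartition part) (i : N.ι) :
    wA N i (N.Y i) = 0 := by
  rw [wA, sum_Y_S_eq hp i (fun _ => 1), sum_Y_U_eq h1 i (fun _ => 1)]
  rfl

theorem phiv_S (h1 : N.Assumption1) (i : N.ι) {q : ℕ} (hq : q ≤ N.L i) :
    phiv N i (N.S i q) = 2 * ((N.L i : ℤ) - q) := by
  rw [phiv, sum_S_eq h1 i hq (fun t => 2 * ((N.L i : ℤ) - t)),
    sum_S_U_eq h1 i hq (fun t => 2 * ((N.L i : ℤ) - t) - 1), add_zero]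

theorem phiv_U (h1 : N.Assumption1) (i : N.ι) {t : ℕ} (ht : t < N.L i) :
    phiv N i (N.U i (t + 1)) = 2 * ((N.L i : ℤ) - t) - 1 := by
  rw [phiv, sum_U_S_eq h1 i ht (fun q => 2 * ((N.L i : ℤ) - q)),
    sum_U_eq h1 i ht (fun q => 2 * ((N.L i : ℤ) - q) - 1), zero_add]

theorem phiv_Y (h1 : N.Assumption1) {part : σ → ℕ} (hp : N.IsPartition part) (i : N.ι) :
    phiv N i (N.Y i) = 0 := by
  rw [phiv, sum_Y_S_eq hp i (fun t => 2 * ((N.L i : ℤ) - t)),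
    sum_Y_U_eq h1 i (fun t => 2 * ((N.L i : ℤ) - t) - 1), add_zero]

theorem WA_pairm (h1 : N.Assumption1) {part : σ → ℕ} (hp : N.IsPartition part) (i : N.ι)
    {q : ℕ} (hq : q ≤ N.L i) : WA N i (N.pairm i q) = 1 := by
  rw [pairm, WA_add, WA_single, WA_single, wA_Y h1 hp, wA_S h1 i hq]

theorem WA_intm (h1 : N.Assumption1) (i : N.ι) {t : ℕ} (ht : t < N.L i) :
    WA N i (N.intm i (t + 1)) = 1 := by
  rw [intm, WA_single, wA_U h1 i ht, one_mul]

theorem PH_pairm (h1 : N.Assumption1) {part : σ → ℕ} (hp : N.IsPartition part) (i : N.ι)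
    {q : ℕ} (hq : q ≤ N.L i) : PH N i (N.pairm i q) = 2 * ((N.L i : ℤ) - q) := by
  rw [pairm, PH_add, PH_single, PH_single, phiv_Y h1 hp, phiv_S h1 i hq]
  push_cast; ring

theorem PH_intm (h1 : N.Assumption1) (i : N.ι) {t : ℕ} (ht : t < N.L i) :
    PH N i (N.intm i (t + 1)) = 2 * ((N.L i : ℤ) - t) - 1 := by
  rw [intm, PH_single, phiv_U h1 i ht]
  push_cast; ring

theorem sub_add_of_le {T v : σ →₀ ℕ} (h : v ≤ T) : T - v + v = T :=
  tsub_add_cancel_of_le h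

theorem WA_sub_add (i : N.ι) {T v : σ →₀ ℕ} (h : v ≤ T) (z : σ) :
    WA N i (T - v + Finsupp.single z 1) + WA N i v = WA N i T + wA N i z := by
  have : WA N i (T - v) + WA N i v = WA N i T := by rw [← WA_add, sub_add_of_le h]
  rw [WA_add, WA_single, one_mul]
  omega

theorem PH_sub_add (i : N.ι) {T v : σ →₀ ℕ} (h : v ≤ T) (z : σ) :
    PH N i (T - v + Finsupp.single z 1) = PH N i T - PH N i v + phiv N i z := by
  have h2 : PH N i (T - v) + PH N i v = PH N i T := by rw [← PH_add, sub_add_of_le h]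
  rw [PH_add, PH_single]
  push_cast
  omega

theorem WA_le_of_le (i : N.ι) {T v : σ →₀ ℕ} (h : v ≤ T) : WA N i v ≤ WA N i T := by
  have : WA N i (T - v) + WA N i v = WA N i T := by rw [← WA_add, sub_add_of_le h]
  omega

/-- Vanishing: coefficients with zero `α`-weight vanish. -/
theorem coeff_PP_WA_zero (h1 : N.Assumption1) {part : σ → ℕ} (hp : N.IsPartition part)
    (k : N.Param → ℝ) (i : N.ι) (ℓ : ℕ) {T : σ →₀ ℕ} (hT : WA N i T = 0) :
    coeff T (PP N k i ℓ) = 0 := by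
  cases ℓ with
  | zero =>
    rw [PP, lieDIter, coeff_X']
    rw [if_neg]
    intro h
    rw [← h, WA_single, wA_S h1 i le_rfl] at hT
    omega
  | succ ℓ =>
    rw [PP]
    show coeff T (lieD (N.rhs1 k i) (lieDIter (N.rhs1 k i) ℓ (X (N.S i (N.L i))))) = 0
    rw [coeff_lieD_rhs1]
    refine Finset.sum_eq_zero fun j _ => ?_
    rw [if_neg, if_neg, add_zero]
    · intro h
      have := WA_le_of_le i h
      rw [WA_intm h1 i j.2] at this
      omega
    · intro h
      have := WA_le_of_le i h
      rw [WA_pairm h1 hp i (le_of_lt j.2)] at this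
      omega

/-- Vanishing: coefficients of too-high monomials vanish at early derivatives. -/
theorem coeff_PP_PH (h1 : N.Assumption1) {part : σ → ℕ} (hp : N.IsPartition part)
    (k : N.Param → ℝ) (i : N.ι) (ℓ : ℕ) :
    ∀ T : σ →₀ ℕ, (∀ x ∈ T.support, x ∈ N.CV i) → WA N i T = 1 →
      (ℓ : ℤ) < PH N i T → coeff T (PP N k i ℓ) = 0 := by
  induction ℓ with
  | zero =>
    intro T hsupp hWA hPH
    rw [PP, lieDIter, coeff_X']
    rw [if_neg]
    intro h
    rw [← h, PH_single, phiv_S h1 i le_rfl] at hPH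
    push_cast at hPH
    omega
  | succ ℓ ih =>
    intro T hsupp hWA hPH
    rw [PP]
    show coeff T (lieD (N.rhs1 k i) (PP N k i ℓ)) = 0
    rw [coeff_lieD_rhs1]
    refine Finset.sum_eq_zero fun j _ => ?_
    have hj1 : (j : ℕ) ≤ N.L i := le_of_lt j.2
    have hj2 : (j : ℕ) + 1 ≤ N.L i := j.2
    -- a helper handling a single `wf`-term
    have key : ∀ v : σ →₀ ℕ, v ≤ T → WA N i v = 1 → ∀ z : σ, z ∈ N.CV i →
        (wA N i z = 0 ∨ (wA N i z = 1 ∧ (ℓ : ℤ) < PH N i T - PH N i v + phiv N i z)) →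
        wf (PP N k i ℓ) T v z = 0 := by
      intro v hv hWAv z hz hcase
      rw [wf]
      have hM : WA N i (T - v + Finsupp.single z 1) + 1 = 1 + wA N i z := by
        have := WA_sub_add i hv z
        rw [hWA, hWAv] at this
        omega
      rcases hcase with h0 | ⟨hw1, hlt⟩
      · rw [coeff_PP_WA_zero h1 hp k i ℓ (by omega), mul_zero]
      · rw [ih _ ?_ (by omega) ?_, mul_zero]
        · intro x hx
          rcases Finset.mem_union.1 (Finsupp.support_add hx) with hx | hx
          · exact hsupp x (support_sub_subset hx)
          · rcases Finset.mem_singleton.1 (Finsupp.support_single_subset hx) with rfl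
            exact hz
        · rw [PH_sub_add i hv z]
          exact hlt
    have hYCV : N.Y i ∈ N.CV i := Or.inl rfl
    have hSCV : N.S i (j : ℕ) ∈ N.CV i := Or.inr (Or.inl ⟨(j : ℕ), hj1, rfl⟩)
    have hS'CV : N.S i ((j : ℕ) + 1) ∈ N.CV i := Or.inr (Or.inl ⟨(j : ℕ) + 1, hj2, rfl⟩)
    have hUCV : N.U i ((j : ℕ) + 1) ∈ N.CV i := Or.inr (Or.inr ⟨j, rfl⟩)
    have hwaY : wA N i (N.Y i) = 0 := wA_Y h1 hp i
    have hwaS : wA N i (N.S i (j : ℕ)) = 1 := wA_S h1 i hj1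
    have hwaS' : wA N i (N.S i ((j : ℕ) + 1)) = 1 := wA_S h1 i hj2
    have hwaU : wA N i (N.U i ((j : ℕ) + 1)) = 1 := wA_U h1 i j.2
    have hPT : (ℓ : ℤ) + 1 < PH N i T := by exact_mod_cast hPH
    split_ifs with hpa hin hin
    · rw [key _ hpa (WA_pairm h1 hp i hj1) _ hUCV (Or.inr ⟨hwaU, by
          rw [PH_pairm h1 hp i hj1, phiv_U h1 i j.2]; omega⟩),
        key _ hpa (WA_pairm h1 hp i hj1) _ hYCV (Or.inl hwaY),
        key _ hpa (WA_pairm h1 hp i hj1) _ hSCV (Or.inr ⟨hwaS, by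
          rw [PH_pairm h1 hp i hj1, phiv_S h1 i hj1]; omega⟩),
        key _ hin (WA_intm h1 i j.2) _ hYCV (Or.inl hwaY),
        key _ hin (WA_intm h1 i j.2) _ hSCV (Or.inr ⟨hwaS, by
          rw [PH_intm h1 i j.2, phiv_S h1 i hj1]; omega⟩),
        key _ hin (WA_intm h1 i j.2) _ hS'CV (Or.inr ⟨hwaS', by
          rw [PH_intm h1 i j.2, phiv_S h1 i hj2]; push_cast; omega⟩),
        key _ hin (WA_intm h1 i j.2) _ hUCV (Or.inr ⟨hwaU, by
          rw [PH_intm h1 i j.2, phiv_U h1 i j.2]; omega⟩)]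
      ring
    · rw [key _ hpa (WA_pairm h1 hp i hj1) _ hUCV (Or.inr ⟨hwaU, by
          rw [PH_pairm h1 hp i hj1, phiv_U h1 i j.2]; omega⟩),
        key _ hpa (WA_pairm h1 hp i hj1) _ hYCV (Or.inl hwaY),
        key _ hpa (WA_pairm h1 hp i hj1) _ hSCV (Or.inr ⟨hwaS, by
          rw [PH_pairm h1 hp i hj1, phiv_S h1 i hj1]; omega⟩)]
      ring
    · rw [key _ hin (WA_intm h1 i j.2) _ hYCV (Or.inl hwaY),
        key _ hin (WA_intm h1 i j.2) _ hSCV (Or.inr ⟨hwaS, by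
          rw [PH_intm h1 i j.2, phiv_S h1 i hj1]; omega⟩),
        key _ hin (WA_intm h1 i j.2) _ hS'CV (Or.inr ⟨hwaS', by
          rw [PH_intm h1 i j.2, phiv_S h1 i hj2]; push_cast; omega⟩),
        key _ hin (WA_intm h1 i j.2) _ hUCV (Or.inr ⟨hwaU, by
          rw [PH_intm h1 i j.2, phiv_U h1 i j.2]; omega⟩)]
      ring
    · simp


/-- Rate constant accessors by block number (0-based). -/
noncomputable def kA (N : A1Network σ) (k : N.Param → ℝ) (i : N.ι) (t : ℕ) : ℝ :=
  if h : t < N.L i then k ⟨i, ⟨t, h⟩, 0⟩ else 1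

noncomputable def kB (N : A1Network σ) (k : N.Param → ℝ) (i : N.ι) (t : ℕ) : ℝ :=
  if h : t < N.L i then k ⟨i, ⟨t, h⟩, 1⟩ else 1

noncomputable def kC (N : A1Network σ) (k : N.Param → ℝ) (i : N.ι) (t : ℕ) : ℝ :=
  if h : t < N.L i then k ⟨i, ⟨t, h⟩, 2⟩ else 1

theorem kA_eq (k : N.Param → ℝ) (i : N.ι) (j : Fin (N.L i)) :
    kA N k i (j : ℕ) = k ⟨i, j, 0⟩ := by rw [kA, dif_pos j.2]

theorem kB_eq (k : N.Param → ℝ) (i : N.ι) (j : Fin (N.L i)) :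
    kB N k i (j : ℕ) = k ⟨i, j, 1⟩ := by rw [kB, dif_pos j.2]

theorem kC_eq (k : N.Param → ℝ) (i : N.ι) (j : Fin (N.L i)) :
    kC N k i (j : ℕ) = k ⟨i, j, 2⟩ := by rw [kC, dif_pos j.2]

/-- `γ_r`, the product of rate constants along the main chain. -/
noncomputable def gam (N : A1Network σ) (k : N.Param → ℝ) (i : N.ι) : ℕ → ℝ
  | 0 => kC N k i (N.L i - 1)
  | r + 1 => gam N k i r * kA N k i (N.L i - 1 - r) * kC N k i (N.L i - 2 - r)

theorem supp_single_CV {i : N.ι} {z : σ} (hz : z ∈ N.CV i) (n : ℕ) :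
    ∀ x ∈ (Finsupp.single z n).support, x ∈ N.CV i := by
  intro x hx
  rcases Finset.mem_singleton.1 (Finsupp.support_single_subset hx) with rfl
  exact hz

theorem supp_add_CV {i : N.ι} {A B : σ →₀ ℕ} (hA : ∀ x ∈ A.support, x ∈ N.CV i)
    (hB : ∀ x ∈ B.support, x ∈ N.CV i) : ∀ x ∈ (A + B).support, x ∈ N.CV i := by
  intro x hx
  rcases Finset.mem_union.1 (Finsupp.support_add hx) with hx | hx
  · exact hA x hx
  · exact hB x hx

theorem wf_X_ne (i : N.ι) {M v : σ →₀ ℕ} {z : σ} (hz : z ≠ N.S i (N.L i)) :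
    wf (X (N.S i (N.L i)) : MvPolynomial σ ℝ) M v z = 0 := by
  rw [wf, MvPolynomial.coeff_X', if_neg, mul_zero]
  intro h
  have := congrArg (fun f => f z) h
  simp only [Finsupp.add_apply, Finsupp.single_apply] at this
  rw [if_neg (fun hh => hz hh.symm)] at this
  simp only [if_true] at this
  omega

theorem wf_X_self (i : N.ι) {M v : σ →₀ ℕ} (h : v ≤ M) :
    wf (X (N.S i (N.L i)) : MvPolynomial σ ℝ) M v (N.S i (N.L i))
      = if M = v then 1 else 0 := by
  rw [wf, MvPolynomial.coeff_X']
  by_cases hMv : M = v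
  · subst hMv
    simp
  · rw [if_neg hMv, if_neg, mul_zero]
    intro hh
    have h0 : M - v = 0 := by
      have := add_right_cancel (a := M - v) (b := Finsupp.single (N.S i (N.L i)) 1)
        (c := (0 : σ →₀ ℕ)) (by rw [zero_add]; exact hh.symm)
      exact this
    exact hMv (le_antisymm (tsub_eq_zero_iff_le.1 h0) h)

theorem not_pairm_le {i : N.ι} {q : ℕ} {T : σ →₀ ℕ} (hS : T (N.S i q) = 0) :
    ¬ N.pairm i q ≤ T := fun hle => by
  have := (pairm_le_parts hle).2
  omega

theorem not_intm_le {i : N.ι} {t : ℕ} {T : σ →₀ ℕ} (hU : T (N.U i t) = 0) :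
    ¬ N.intm i t ≤ T := fun hle => by
  have := le_one_of_single_le hle
  omega

/-- The sector-1 monomials: `y^r · u_{L-r}` resp. `y^{r+1} · s_{L-1-r}`. -/
noncomputable def TA (N : A1Network σ) (i : N.ι) (r : ℕ) : σ →₀ ℕ :=
  Finsupp.single (N.Y i) r + N.intm i (N.L i - 1 - r + 1)

noncomputable def TB (N : A1Network σ) (i : N.ι) (r : ℕ) : σ →₀ ℕ :=
  Finsupp.single (N.Y i) (r + 1) + Finsupp.single (N.S i (N.L i - 1 - r)) 1

theorem AB_chain (h1 : N.Assumption1) {part : σ → ℕ} (hp : N.IsPartition part)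
    (k : N.Param → ℝ) (i : N.ι) (r : ℕ) (hr : r < N.L i) :
    coeff (TA N i r) (PP N k i (2 * r + 1)) = gam N k i r ∧
    coeff (TB N i r) (PP N k i (2 * r + 2)) = gam N k i r * kA N k i (N.L i - 1 - r) := by
  induction r with
  | zero =>
    have hL := N.Lpos i
    have hsucc : N.L i - 1 + 1 = N.L i := by omega
    set j0 : Fin (N.L i) := ⟨N.L i - 1, by omega⟩ with hj0
    have hj0v : (j0 : ℕ) = N.L i - 1 := rfl
    have hTA0 : TA N i 0 = N.intm i (N.L i) := by
      rw [TA, Nat.sub_zero, hsucc, Finsupp.single_zero, zero_add]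
    have hUS : ∀ q ≤ N.L i, ∀ t : Fin (N.L i), N.U i ((t : ℕ) + 1) ≠ N.S i q :=
      fun q hq t => h1.U_ne_S i t i q hq
    have hTA0S : ∀ q ≤ N.L i, TA N i 0 (N.S i q) = 0 := by
      intro q hq
      rw [hTA0, intm]
      refine Finsupp.single_eq_of_ne' fun h => hUS q hq j0 ?_
      rw [hj0v, hsucc]
      exact h
    have hTA0U : ∀ t : Fin (N.L i), t ≠ j0 → TA N i 0 (N.U i ((t : ℕ) + 1)) = 0 := by
      intro t ht
      rw [hTA0, intm]
      refine Finsupp.single_eq_of_ne' fun h => ht ?_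
      have h' : N.U i ((j0 : ℕ) + 1) = N.U i ((t : ℕ) + 1) := by
        rw [hj0v, hsucc]; exact h
      exact (Fin.ext ((h1.U_inj i j0 i t h').2)).symm
    -- the `A` part at r = 0
    have hA0 : coeff (TA N i 0) (PP N k i 1) = gam N k i 0 := by
      show coeff (TA N i 0) (lieD (N.rhs1 k i) (PP N k i 0)) = gam N k i 0
      rw [coeff_lieD_rhs1, Finset.sum_eq_single j0]
      · rw [if_neg (not_pairm_le (hTA0S _ (by omega))), if_pos (by rw [hTA0, hj0v, hsucc])]
        have hw1 : wf (PP N k i 0) (TA N i 0) (N.intm i ((j0 : ℕ) + 1)) (N.Y i) = 0 :=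
          wf_X_ne i (y_ne_s hp i (N.L i) le_rfl)
        have hw2 : wf (PP N k i 0) (TA N i 0) (N.intm i ((j0 : ℕ) + 1)) (N.S i (j0 : ℕ)) = 0 := by
          refine wf_X_ne i fun h => ?_
          have := h1.S_inj i (j0 : ℕ) (N.L i) (by omega) le_rfl h
          omega
        have hw3 : wf (PP N k i 0) (TA N i 0) (N.intm i ((j0 : ℕ) + 1))
            (N.U i ((j0 : ℕ) + 1)) = 0 :=
          wf_X_ne i (h1.U_ne_S i j0 i (N.L i) le_rfl)
        have hw4 : wf (PP N k i 0) (TA N i 0) (N.intm i ((j0 : ℕ) + 1))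
            (N.S i ((j0 : ℕ) + 1)) = 1 := by
          have h := wf_X_self i (M := TA N i 0) (v := N.intm i (N.L i)) (by rw [hTA0])
          rw [if_pos hTA0] at h
          show wf (X (N.S i (N.L i))) (TA N i 0) (N.intm i ((j0 : ℕ) + 1))
            (N.S i ((j0 : ℕ) + 1)) = 1
          rw [hj0v, hsucc]
          exact h
        rw [hw1, hw2, hw3, hw4, gam, ← kC_eq k i j0, hj0v]
        ring
      · intro j _ hne
        rw [if_neg (not_pairm_le (hTA0S _ (by omega))),
          if_neg (not_intm_le (hTA0U j hne)), add_zero]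
      · intro h; exact absurd (Finset.mem_univ j0) h
    refine ⟨hA0, ?_⟩
    -- the `B` part at r = 0
    have hTB0 : TB N i 0 = N.pairm i (N.L i - 1) := by
      rw [TB, Nat.sub_zero, pairm]
    have hTBU : ∀ t : Fin (N.L i), TB N i 0 (N.U i ((t : ℕ) + 1)) = 0 := by
      intro t
      rw [hTB0, pairm, Finsupp.add_apply,
        Finsupp.single_eq_of_ne' (fun h => (h1.U_ne_Y i t i) h.symm),
        Finsupp.single_eq_of_ne' (fun h => (hUS _ (by omega) t) h.symm)]
      rfl
    show coeff (TB N i 0) (lieD (N.rhs1 k i) (PP N k i 1)) = _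
    rw [coeff_lieD_rhs1, Finset.sum_eq_single j0]
    · rw [if_pos (by rw [hTB0, hj0v]), if_neg (not_intm_le (hTBU j0))]
      have hle : N.pairm i (j0 : ℕ) ≤ TB N i 0 := by rw [hTB0, hj0v]
      have hsub : TB N i 0 - N.pairm i (j0 : ℕ) = 0 := by
        rw [hTB0, hj0v, tsub_self]
      have hw1 : wf (PP N k i 1) (TB N i 0) (N.pairm i (j0 : ℕ))
          (N.U i ((j0 : ℕ) + 1)) = gam N k i 0 := by
        rw [wf, hsub, zero_add, Finsupp.coe_zero, Pi.zero_apply]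
        rw [show (Finsupp.single (N.U i ((j0 : ℕ) + 1)) 1) = TA N i 0 from by
          rw [hTA0, intm, hj0v, hsucc]]
        rw [hA0]
        norm_num
      have hw2 : wf (PP N k i 1) (TB N i 0) (N.pairm i (j0 : ℕ)) (N.Y i) = 0 := by
        rw [wf, hsub, zero_add]
        rw [coeff_PP_WA_zero h1 hp k i 1 (by rw [WA_single, wA_Y h1 hp i]), mul_zero]
      have hw3 : wf (PP N k i 1) (TB N i 0) (N.pairm i (j0 : ℕ)) (N.S i (j0 : ℕ)) = 0 := by
        rw [wf, hsub, zero_add]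
        rw [coeff_PP_PH h1 hp k i 1 _
          (supp_single_CV (Or.inr (Or.inl ⟨(j0 : ℕ), by omega, rfl⟩)) 1)
          (by rw [WA_single, wA_S h1 i (by omega : (j0 : ℕ) ≤ N.L i)]) ?_, mul_zero]
        rw [PH_single, phiv_S h1 i (by omega : (j0 : ℕ) ≤ N.L i), hj0v]
        push_cast
        omega
      rw [hw1, hw2, hw3, gam, ← kA_eq k i j0, hj0v, Nat.sub_zero]
      ring
    · intro j _ hne
      have hpa : TB N i 0 (N.S i (j : ℕ)) = 0 := by
        rw [hTB0, pairm, Finsupp.add_apply,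
          Finsupp.single_eq_of_ne' (y_ne_s hp i (j : ℕ) (by omega)),
          Finsupp.single_eq_of_ne' (fun h => hne (Fin.ext
            (by rw [hj0v, h1.S_inj i (N.L i - 1) (j : ℕ) (by omega) (by omega) h])))]
        rfl
      rw [if_neg (not_pairm_le hpa), if_neg (not_intm_le (hTBU j))]
      norm_num
    · intro h; exact absurd (Finset.mem_univ j0) h
  | succ r ih =>
    obtain ⟨hA, hB⟩ := ih (by omega)
    have hL := N.Lpos i
    set d := N.L i - 1 - (r + 1) with hd
    have hdlt : d < N.L i := by omega
    set j0 : Fin (N.L i) := ⟨d, hdlt⟩ with hj0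
    have hj0v : (j0 : ℕ) = d := rfl
    have hYCV : N.Y i ∈ N.CV i := Or.inl rfl
    -- vanishing helpers
    have hvanY : ∀ (n ℓ : ℕ), coeff (Finsupp.single (N.Y i) n) (PP N k i ℓ) = 0 :=
      fun n ℓ => coeff_PP_WA_zero h1 hp k i ℓ (by rw [WA_single, wA_Y h1 hp i, mul_zero])
    have hvanS : ∀ (n q ℓ : ℕ), q ≤ N.L i → (ℓ : ℤ) < 2 * ((N.L i : ℤ) - q) →
        coeff (Finsupp.single (N.Y i) n + Finsupp.single (N.S i q) 1) (PP N k i ℓ) = 0 := by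
      intro n q ℓ hq hlt
      refine coeff_PP_PH h1 hp k i ℓ _
        (supp_add_CV (supp_single_CV hYCV n)
          (supp_single_CV (Or.inr (Or.inl ⟨q, hq, rfl⟩)) 1)) ?_ ?_
      · rw [WA_add, WA_single, WA_single, wA_Y h1 hp i, wA_S h1 i hq]
        omega
      · rw [PH_add, PH_single, PH_single, phiv_Y h1 hp i, phiv_S h1 i hq]
        push_cast
        omega
    have hvanU : ∀ (n t ℓ : ℕ), t < N.L i → (ℓ : ℤ) < 2 * ((N.L i : ℤ) - t) - 1 →
        coeff (Finsupp.single (N.Y i) n + Finsupp.single (N.U i (t + 1)) 1)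
          (PP N k i ℓ) = 0 := by
      intro n t ℓ ht hlt
      refine coeff_PP_PH h1 hp k i ℓ _
        (supp_add_CV (supp_single_CV hYCV n)
          (supp_single_CV (Or.inr (Or.inr ⟨⟨t, ht⟩, rfl⟩)) 1)) ?_ ?_
      · rw [WA_add, WA_single, WA_single, wA_Y h1 hp i, wA_U h1 i ht]
        omega
      · rw [PH_add, PH_single, PH_single, phiv_Y h1 hp i, phiv_U h1 i ht]
        push_cast
        omega
    -- apply-value facts for the `A`-target
    have hTAS : ∀ q ≤ N.L i, TA N i (r + 1) (N.S i q) = 0 := by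
      intro q hq
      rw [TA, intm, Finsupp.add_apply,
        Finsupp.single_eq_of_ne' (y_ne_s hp i q hq),
        Finsupp.single_eq_of_ne' (h1.U_ne_S i j0 i q hq)]
      rfl
    have hTAU : ∀ t : Fin (N.L i), t ≠ j0 → TA N i (r + 1) (N.U i ((t : ℕ) + 1)) = 0 := by
      intro t ht
      rw [TA, intm, Finsupp.add_apply,
        Finsupp.single_eq_of_ne' (fun h => (h1.U_ne_Y i t i) h.symm),
        Finsupp.single_eq_of_ne' (fun h => ht (Fin.ext ((h1.U_inj i j0 i t h).2)).symm)]
      rfl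
    have hidx : 2 * (r + 1) + 1 = (2 * r + 2) + 1 := by ring
    -- the `A` part at r + 1
    have hA' : coeff (TA N i (r + 1)) (PP N k i (2 * (r + 1) + 1)) = gam N k i (r + 1) := by
      rw [hidx]
      show coeff (TA N i (r + 1)) (lieD (N.rhs1 k i) (PP N k i (2 * r + 2))) = _
      rw [coeff_lieD_rhs1, Finset.sum_eq_single j0]
      · rw [if_neg (not_pairm_le (hTAS _ (by omega))),
          if_pos (show N.intm i ((j0 : ℕ) + 1) ≤ TA N i (r + 1) from by
            rw [TA, hj0v]; exact self_le_add_left _ _)]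
        have hsub : TA N i (r + 1) - N.intm i ((j0 : ℕ) + 1)
            = Finsupp.single (N.Y i) (r + 1) := by
          rw [TA, hj0v]
          exact add_tsub_cancel_right _ _
        have hw1 : wf (PP N k i (2 * r + 2)) (TA N i (r + 1)) (N.intm i ((j0 : ℕ) + 1))
            (N.Y i) = 0 := by
          rw [wf, hsub, ← Finsupp.single_add, hvanY, mul_zero]
        have hw2 : wf (PP N k i (2 * r + 2)) (TA N i (r + 1)) (N.intm i ((j0 : ℕ) + 1))
            (N.S i (j0 : ℕ)) = 0 := by
          rw [wf, hsub, hvanS (r + 1) (j0 : ℕ) (2 * r + 2) (by omega) (by push_cast [hj0v]; omega),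
            mul_zero]
        have hw3 : wf (PP N k i (2 * r + 2)) (TA N i (r + 1)) (N.intm i ((j0 : ℕ) + 1))
            (N.U i ((j0 : ℕ) + 1)) = 0 := by
          rw [wf, hsub, hvanU (r + 1) (j0 : ℕ) (2 * r + 2) hdlt (by push_cast [hj0v]; omega),
            mul_zero]
        have hw4 : wf (PP N k i (2 * r + 2)) (TA N i (r + 1)) (N.intm i ((j0 : ℕ) + 1))
            (N.S i ((j0 : ℕ) + 1)) = gam N k i r * kA N k i (N.L i - 1 - r) := by
          rw [wf, hsub]
          have hM : Finsupp.single (N.Y i) (r + 1)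
              + Finsupp.single (N.S i ((j0 : ℕ) + 1)) 1 = TB N i r := by
            rw [TB, hj0v, show d + 1 = N.L i - 1 - r from by omega]
          rw [hM, hB, Finsupp.single_apply,
            if_neg (fun h => (y_ne_s hp i ((j0 : ℕ) + 1) (by omega)) h)]
          norm_num
        rw [hw1, hw2, hw3, hw4, ← kC_eq k i j0, hj0v]
        rw [gam, show N.L i - 2 - r = d from by omega]
        ring
      · intro j _ hne
        rw [if_neg (not_pairm_le (hTAS _ (by omega))),
          if_neg (not_intm_le (hTAU j hne))]
        norm_num
      · intro h; exact absurd (Finset.mem_univ j0) h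
    refine ⟨hA', ?_⟩
    -- the `B` part at r + 1
    have hTBU : ∀ t : Fin (N.L i), TB N i (r + 1) (N.U i ((t : ℕ) + 1)) = 0 := by
      intro t
      rw [TB, Finsupp.add_apply,
        Finsupp.single_eq_of_ne' (fun h => (h1.U_ne_Y i t i) h.symm),
        Finsupp.single_eq_of_ne' (fun h => (h1.U_ne_S i t i d (by omega)) h.symm)]
      rfl
    have hdec : TB N i (r + 1) = N.pairm i d + Finsupp.single (N.Y i) (r + 1) := by
      rw [TB, pairm, show r + 1 + 1 = 1 + (r + 1) from by ring, Finsupp.single_add]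
      abel
    have hidx2 : 2 * (r + 1) + 2 = (2 * (r + 1) + 1) + 1 := by ring
    rw [hidx2]
    show coeff (TB N i (r + 1)) (lieD (N.rhs1 k i) (PP N k i (2 * (r + 1) + 1))) = _
    rw [coeff_lieD_rhs1, Finset.sum_eq_single j0]
    · rw [if_pos (by rw [hdec, hj0v]; exact self_le_add_right _ _),
        if_neg (not_intm_le (hTBU j0))]
      have hsub : TB N i (r + 1) - N.pairm i (j0 : ℕ) = Finsupp.single (N.Y i) (r + 1) := by
        rw [hdec, hj0v]
        exact add_tsub_cancel_left _ _
      have hw1 : wf (PP N k i (2 * (r + 1) + 1)) (TB N i (r + 1)) (N.pairm i (j0 : ℕ))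
          (N.U i ((j0 : ℕ) + 1)) = gam N k i (r + 1) := by
        rw [wf, hsub]
        have hM : Finsupp.single (N.Y i) (r + 1)
            + Finsupp.single (N.U i ((j0 : ℕ) + 1)) 1 = TA N i (r + 1) := by
          rw [TA, intm, hj0v]
        rw [hM, hA', Finsupp.single_apply,
          if_neg (fun h => (h1.U_ne_Y i j0 i) h.symm)]
        norm_num
      have hw2 : wf (PP N k i (2 * (r + 1) + 1)) (TB N i (r + 1)) (N.pairm i (j0 : ℕ))
          (N.Y i) = 0 := by
        rw [wf, hsub, ← Finsupp.single_add, hvanY, mul_zero]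
      have hw3 : wf (PP N k i (2 * (r + 1) + 1)) (TB N i (r + 1)) (N.pairm i (j0 : ℕ))
          (N.S i (j0 : ℕ)) = 0 := by
        rw [wf, hsub, hvanS (r + 1) (j0 : ℕ) (2 * (r + 1) + 1) (by omega)
          (by push_cast [hj0v]; omega), mul_zero]
      rw [hw1, hw2, hw3, ← kA_eq k i j0, hj0v]
      ring
    · intro j _ hne
      have hpa : TB N i (r + 1) (N.S i (j : ℕ)) = 0 := by
        rw [TB, Finsupp.add_apply,
          Finsupp.single_eq_of_ne' (y_ne_s hp i (j : ℕ) (by omega)),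
          Finsupp.single_eq_of_ne' (fun h => hne (Fin.ext
            (by rw [hj0v, h1.S_inj i d (j : ℕ) (by omega) (by omega) h])))]
        rfl
      rw [if_neg (not_pairm_le hpa), if_neg (not_intm_le (hTBU j))]
      norm_num
    · intro h; exact absurd (Finset.mem_univ j0) h


theorem ind_self (a : σ) : ind a a = 1 := if_pos rfl

theorem ind_eq_zero {a x : σ} (h : a ≠ x) : ind a x = 0 := if_neg h

theorem lieD_X (f : σ → MvPolynomial σ ℝ) (z : σ) : lieD f (X z) = f z := by
  rw [lieD, Finset.sum_eq_single z]
  · rw [pderiv_X_self, one_mul]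
  · intro b _ hb
    rw [pderiv_X_of_ne (Ne.symm hb), zero_mul]
  · intro h; exact absurd (Finset.mem_univ z) h

theorem lieD_C_mul (f : σ → MvPolynomial σ ℝ) (c : ℝ) (φ : MvPolynomial σ ℝ) :
    lieD f (C c * φ) = C c * lieD f φ := by
  rw [lieD, lieD, Finset.mul_sum]
  refine Finset.sum_congr rfl fun x _ => ?_
  rw [show pderiv x (C c * φ) = C c * pderiv x φ from by
    rw [pderiv_mul, pderiv_C, zero_mul, zero_add]]
  ring

theorem PP_one (h1 : N.Assumption1) {part : σ → ℕ} (hp : N.IsPartition part)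
    (k : N.Param → ℝ) (i : N.ι) :
    PP N k i 1 = monomial (N.intm i (N.L i)) (kC N k i (N.L i - 1)) := by
  have hL := N.Lpos i
  set jl : Fin (N.L i) := ⟨N.L i - 1, by omega⟩ with hjl
  have hjlv : (jl : ℕ) = N.L i - 1 := rfl
  have h0 : PP N k i 1 = N.rhs1 k i (N.S i (N.L i)) := by
    show lieD (N.rhs1 k i) (X (N.S i (N.L i))) = _
    rw [lieD_X]
  rw [h0, rhs1, Finset.sum_eq_single jl]
  · have ha : N.acoef k i jl (N.S i (N.L i)) = 0 := by
      rw [acoef, ind_eq_zero (h1.U_ne_S i jl i (N.L i) le_rfl),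
        ind_eq_zero (y_ne_s hp i (N.L i) le_rfl),
        ind_eq_zero (fun h => by have := h1.S_inj i (jl : ℕ) (N.L i) (by omega) le_rfl h; omega)]
      ring
    have hb : N.bcoef k i jl (N.S i (N.L i)) = kC N k i (N.L i - 1) := by
      rw [bcoef, ind_eq_zero (h1.U_ne_S i jl i (N.L i) le_rfl),
        ind_eq_zero (y_ne_s hp i (N.L i) le_rfl),
        ind_eq_zero (fun h => by have := h1.S_inj i (jl : ℕ) (N.L i) (by omega) le_rfl h; omega),
        show (jl : ℕ) + 1 = N.L i from by omega, ind_self, ← kC_eq k i jl, hjlv]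
      ring
    rw [ha, hb, map_zero, zero_add, show (jl : ℕ) + 1 = N.L i from by omega]
  · intro j _ hne
    have ha : N.acoef k i j (N.S i (N.L i)) = 0 := by
      rw [acoef, ind_eq_zero (h1.U_ne_S i j i (N.L i) le_rfl),
        ind_eq_zero (y_ne_s hp i (N.L i) le_rfl),
        ind_eq_zero (fun h => by have := h1.S_inj i (j : ℕ) (N.L i) (by omega) le_rfl h; omega)]
      ring
    have hb : N.bcoef k i j (N.S i (N.L i)) = 0 := by
      rw [bcoef, ind_eq_zero (h1.U_ne_S i j i (N.L i) le_rfl),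
        ind_eq_zero (y_ne_s hp i (N.L i) le_rfl),
        ind_eq_zero (fun h => by have := h1.S_inj i (j : ℕ) (N.L i) (by omega) le_rfl h; omega),
        ind_eq_zero (fun h => by
          have := h1.S_inj i ((j : ℕ) + 1) (N.L i) (by omega) le_rfl h
          exact hne (Fin.ext (by omega)))]
      ring
    rw [ha, hb]
    simp
  · intro h; exact absurd (Finset.mem_univ jl) h

theorem PP_two (h1 : N.Assumption1) {part : σ → ℕ} (hp : N.IsPartition part)
    (k : N.Param → ℝ) (i : N.ι) :
    PP N k i 2 = monomial (N.pairm i (N.L i - 1)) (kC N k i (N.L i - 1) * kA N k i (N.L i - 1))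
      + monomial (N.intm i (N.L i))
          (-(kC N k i (N.L i - 1) * (kB N k i (N.L i - 1) + kC N k i (N.L i - 1)))) := by
  have hL := N.Lpos i
  set jl : Fin (N.L i) := ⟨N.L i - 1, by omega⟩ with hjl
  have hjlv : (jl : ℕ) = N.L i - 1 := rfl
  have hmono : monomial (N.intm i (N.L i)) (kC N k i (N.L i - 1))
      = C (kC N k i (N.L i - 1)) * X (N.U i (N.L i)) := by
    rw [intm, MvPolynomial.X, C_mul_monomial, mul_one]
  have h0 : PP N k i 2 = C (kC N k i (N.L i - 1)) * N.rhs1 k i (N.U i (N.L i)) := by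
    show lieD (N.rhs1 k i) (PP N k i 1) = _
    rw [PP_one h1 hp k i, hmono, lieD_C_mul, lieD_X]
  have hYne : N.Y i ≠ N.U i (N.L i) := by
    rw [show N.L i = (jl : ℕ) + 1 from by omega]
    exact fun h => (h1.U_ne_Y i jl i) h.symm
  have hSne : ∀ q ≤ N.L i, N.S i q ≠ N.U i (N.L i) := by
    intro q hq
    rw [show N.L i = (jl : ℕ) + 1 from by omega]
    exact fun h => (h1.U_ne_S i jl i q hq) h.symm
  rw [h0, rhs1, Finset.sum_eq_single jl]
  · have ha : N.acoef k i jl (N.U i (N.L i)) = kA N k i (N.L i - 1) := by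
      rw [acoef, ind_eq_zero hYne, ind_eq_zero (hSne _ (by omega)),
        show (jl : ℕ) + 1 = N.L i from by omega, ind_self, ← kA_eq k i jl, hjlv]
      ring
    have hb : N.bcoef k i jl (N.U i (N.L i))
        = -(kB N k i (N.L i - 1) + kC N k i (N.L i - 1)) := by
      rw [bcoef, ind_eq_zero hYne, ind_eq_zero (hSne _ (by omega)),
        ind_eq_zero (hSne _ (by omega : (jl : ℕ) + 1 ≤ N.L i)),
        show (jl : ℕ) + 1 = N.L i from by omega, ind_self,
        ← kB_eq k i jl, ← kC_eq k i jl, hjlv]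
      ring
    rw [ha, hb, show (jl : ℕ) + 1 = N.L i from by omega, hjlv, mul_add, C_mul_monomial,
      C_mul_monomial, mul_neg]
  · intro j _ hne
    have hUne : N.U i ((j : ℕ) + 1) ≠ N.U i (N.L i) := fun h =>
      hne (Fin.ext (h1.U_inj i j i jl
        (h.trans (by rw [show (jl : ℕ) + 1 = N.L i from by omega]))).2)
    have ha : N.acoef k i j (N.U i (N.L i)) = 0 := by
      rw [acoef, ind_eq_zero hUne, ind_eq_zero hYne, ind_eq_zero (hSne _ (by omega))]
      ring
    have hb : N.bcoef k i j (N.U i (N.L i)) = 0 := by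
      rw [bcoef, ind_eq_zero hUne, ind_eq_zero hYne, ind_eq_zero (hSne _ (by omega)),
        ind_eq_zero (hSne _ (by omega : (j : ℕ) + 1 ≤ N.L i))]
      ring
    rw [ha, hb]
    simp
  · intro h; exact absurd (Finset.mem_univ jl) h


theorem fs_ne_of_apply {A B : σ →₀ ℕ} (z : σ) (h : A z ≠ B z) : A ≠ B :=
  fun e => h (by rw [e])

theorem coeff_PP2 (h1 : N.Assumption1) {part : σ → ℕ} (hp : N.IsPartition part)
    (k : N.Param → ℝ) (i : N.ι) (M : σ →₀ ℕ) :
    coeff M (PP N k i 2)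
      = (if N.pairm i (N.L i - 1) = M then kC N k i (N.L i - 1) * kA N k i (N.L i - 1) else 0)
      + (if N.intm i (N.L i) = M then
          -(kC N k i (N.L i - 1) * (kB N k i (N.L i - 1) + kC N k i (N.L i - 1))) else 0) := by
  rw [PP_two h1 hp k i, coeff_add, coeff_monomial, coeff_monomial]

theorem coeff_PP2_intm (h1 : N.Assumption1) {part : σ → ℕ} (hp : N.IsPartition part)
    (k : N.Param → ℝ) (i : N.ι) :
    coeff (N.intm i (N.L i)) (PP N k i 2)
      = -(kC N k i (N.L i - 1) * (kB N k i (N.L i - 1) + kC N k i (N.L i - 1))) := by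
  have hL := N.Lpos i
  rw [coeff_PP2 h1 hp k i, if_pos rfl, if_neg, zero_add]
  refine fs_ne_of_apply (N.Y i) ?_
  rw [pairm, intm, Finsupp.add_apply, Finsupp.single_eq_same,
    Finsupp.single_eq_of_ne' (y_ne_s hp i (N.L i - 1) (by omega)).symm,
    Finsupp.single_eq_of_ne']
  · omega
  · rw [show N.L i = (N.L i - 1) + 1 from by omega]
    exact fun h => (h1.U_ne_Y i ⟨N.L i - 1, by omega⟩ i) h

/-- generic vanishing of `PP 2`-coefficients on monomials `s_q · z`, `z ≠ y`. -/
theorem coeff_PP2_sz (h1 : N.Assumption1) {part : σ → ℕ} (hp : N.IsPartition part)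
    (k : N.Param → ℝ) (i : N.ι) {q : ℕ} (hq : q ≤ N.L i) {z : σ} (hz : z ≠ N.Y i) :
    coeff (Finsupp.single (N.S i q) 1 + Finsupp.single z 1) (PP N k i 2) = 0 := by
  have hL := N.Lpos i
  rw [coeff_PP2 h1 hp k i, if_neg, if_neg]
  · norm_num
  · refine fs_ne_of_apply (N.S i q) ?_
    rw [intm, Finsupp.add_apply, Finsupp.single_eq_same,
      Finsupp.single_eq_of_ne' (by
        rw [show N.L i = (N.L i - 1) + 1 from by omega]
        exact h1.U_ne_S i ⟨N.L i - 1, by omega⟩ i q hq)]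
    omega
  · refine fs_ne_of_apply (N.Y i) ?_
    rw [pairm, Finsupp.add_apply, Finsupp.add_apply, Finsupp.single_eq_same,
      Finsupp.single_eq_of_ne' (y_ne_s hp i (N.L i - 1) (by omega)).symm,
      Finsupp.single_eq_of_ne' (y_ne_s hp i q hq).symm,
      Finsupp.single_eq_of_ne' hz]
    omega

theorem coeff_PP2_sy (h1 : N.Assumption1) {part : σ → ℕ} (hp : N.IsPartition part)
    (k : N.Param → ℝ) (i : N.ι) {q : ℕ} (hq : q ≤ N.L i) (hq' : q ≠ N.L i - 1) :
    coeff (Finsupp.single (N.S i q) 1 + Finsupp.single (N.Y i) 1) (PP N k i 2) = 0 := by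
  have hL := N.Lpos i
  rw [coeff_PP2 h1 hp k i, if_neg, if_neg]
  · norm_num
  · refine fs_ne_of_apply (N.Y i) ?_
    rw [intm, Finsupp.add_apply, Finsupp.single_eq_same,
      Finsupp.single_eq_of_ne' (y_ne_s hp i q hq).symm,
      Finsupp.single_eq_of_ne' (by
        rw [show N.L i = (N.L i - 1) + 1 from by omega]
        exact fun h => (h1.U_ne_Y i ⟨N.L i - 1, by omega⟩ i) h)]
    omega
  · refine fs_ne_of_apply (N.S i (N.L i - 1)) ?_
    rw [pairm, Finsupp.add_apply, Finsupp.add_apply, Finsupp.single_eq_same,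
      Finsupp.single_eq_of_ne' (y_ne_s hp i (N.L i - 1) (by omega)),
      Finsupp.single_eq_of_ne' (fun h =>
        hq' (h1.S_inj i q (N.L i - 1) hq (by omega) h))]
    omega

theorem coeff_PP2_main (h1 : N.Assumption1) {part : σ → ℕ} (hp : N.IsPartition part)
    (k : N.Param → ℝ) (i : N.ι) :
    coeff (Finsupp.single (N.S i (N.L i - 1)) 1 + Finsupp.single (N.Y i) 1) (PP N k i 2)
      = kC N k i (N.L i - 1) * kA N k i (N.L i - 1) := by
  have hL := N.Lpos i
  rw [coeff_PP2 h1 hp k i, if_pos (by rw [pairm]; abel), if_neg, add_zero]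
  refine fs_ne_of_apply (N.Y i) ?_
  rw [intm, Finsupp.add_apply, Finsupp.single_eq_same,
    Finsupp.single_eq_of_ne' (y_ne_s hp i (N.L i - 1) (by omega)).symm,
    Finsupp.single_eq_of_ne' (by
      rw [show N.L i = (N.L i - 1) + 1 from by omega]
      exact fun h => (h1.U_ne_Y i ⟨N.L i - 1, by omega⟩ i) h)]
  omega

theorem not_pairm_le_Y {i : N.ι} {q : ℕ} {T : σ →₀ ℕ} (hY : T (N.Y i) = 0) :
    ¬ N.pairm i q ≤ T := fun hle => by
  have := (pairm_le_parts hle).1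
  omega

/-- The `b+c` extraction at order 3. -/
theorem coeff_P3_Q (h1 : N.Assumption1) {part : σ → ℕ} (hp : N.IsPartition part)
    (k : N.Param → ℝ) (i : N.ι) (j2 : Fin (N.L i)) :
    coeff (N.intm i ((j2 : ℕ) + 1) + Finsupp.single (N.S i (N.L i - 1)) 1) (PP N k i 3)
      = (k ⟨i, j2, 1⟩ + k ⟨i, j2, 2⟩)
          * (kC N k i (N.L i - 1) * kA N k i (N.L i - 1)) := by
  have hL := N.Lpos i
  set T := N.intm i ((j2 : ℕ) + 1) + Finsupp.single (N.S i (N.L i - 1)) 1 with hT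
  have hTY : T (N.Y i) = 0 := by
    rw [hT, intm, Finsupp.add_apply,
      Finsupp.single_eq_of_ne' (fun h => (h1.U_ne_Y i j2 i) h),
      Finsupp.single_eq_of_ne' (y_ne_s hp i (N.L i - 1) (by omega)).symm]
    rfl
  have hTU : ∀ t : Fin (N.L i), t ≠ j2 → T (N.U i ((t : ℕ) + 1)) = 0 := by
    intro t ht
    rw [hT, intm, Finsupp.add_apply,
      Finsupp.single_eq_of_ne' (fun h => ht (Fin.ext ((h1.U_inj i j2 i t h).2)).symm),
      Finsupp.single_eq_of_ne' (fun h => (h1.U_ne_S i t i (N.L i - 1) (by omega)) h.symm)]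
    rfl
  show coeff T (lieD (N.rhs1 k i) (PP N k i 2)) = _
  rw [coeff_lieD_rhs1, Finset.sum_eq_single j2]
  · rw [if_neg (not_pairm_le_Y hTY), if_pos (self_le_add_right _ _)]
    have hsub : T - N.intm i ((j2 : ℕ) + 1) = Finsupp.single (N.S i (N.L i - 1)) 1 :=
      add_tsub_cancel_left _ _
    have hwY : wf (PP N k i 2) T (N.intm i ((j2 : ℕ) + 1)) (N.Y i)
        = kC N k i (N.L i - 1) * kA N k i (N.L i - 1) := by
      rw [wf, hsub, coeff_PP2_main h1 hp k i,
        Finsupp.single_eq_of_ne' (y_ne_s hp i (N.L i - 1) (by omega)).symm]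
      norm_num
    have hwS : wf (PP N k i 2) T (N.intm i ((j2 : ℕ) + 1)) (N.S i (j2 : ℕ)) = 0 := by
      rw [wf, hsub, coeff_PP2_sz h1 hp k i (by omega) (y_ne_s hp i (j2 : ℕ) (by omega)).symm,
        mul_zero]
    have hwS' : wf (PP N k i 2) T (N.intm i ((j2 : ℕ) + 1)) (N.S i ((j2 : ℕ) + 1)) = 0 := by
      rw [wf, hsub, coeff_PP2_sz h1 hp k i (by omega)
        (y_ne_s hp i ((j2 : ℕ) + 1) (by omega)).symm, mul_zero]
    have hwU : wf (PP N k i 2) T (N.intm i ((j2 : ℕ) + 1)) (N.U i ((j2 : ℕ) + 1)) = 0 := by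
      rw [wf, hsub, coeff_PP2_sz h1 hp k i (by omega)
        (fun h => (h1.U_ne_Y i j2 i) h), mul_zero]
    rw [hwY, hwS, hwS', hwU]
    ring
  · intro j _ hne
    rw [if_neg (not_pairm_le_Y hTY), if_neg (not_intm_le (hTU j hne))]
    norm_num
  · intro h; exact absurd (Finset.mem_univ j2) h

/-- The `a` extraction at order 3. -/
theorem coeff_P3_P (h1 : N.Assumption1) {part : σ → ℕ} (hp : N.IsPartition part)
    (k : N.Param → ℝ) (i : N.ι) (j1 : Fin (N.L i)) (hj : (j1 : ℕ) + 2 ≤ N.L i) :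
    coeff (N.pairm i (j1 : ℕ) + Finsupp.single (N.S i (N.L i - 1)) 1) (PP N k i 3)
      = -(k ⟨i, j1, 0⟩ * (kC N k i (N.L i - 1) * kA N k i (N.L i - 1))) := by
  have hL := N.Lpos i
  set jl : Fin (N.L i) := ⟨N.L i - 1, by omega⟩ with hjl
  have hjlv : (jl : ℕ) = N.L i - 1 := rfl
  have hj1l : j1 ≠ jl := fun h => by
    have := congrArg (fun t : Fin (N.L i) => (t : ℕ)) h
    simp only [hjlv] at this
    omega
  set T := N.pairm i (j1 : ℕ) + Finsupp.single (N.S i (N.L i - 1)) 1 with hT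
  have hTU : ∀ t : Fin (N.L i), T (N.U i ((t : ℕ) + 1)) = 0 := by
    intro t
    rw [hT, pairm, Finsupp.add_apply, Finsupp.add_apply,
      Finsupp.single_eq_of_ne' (fun h => (h1.U_ne_Y i t i) h.symm),
      Finsupp.single_eq_of_ne' (fun h => (h1.U_ne_S i t i (j1 : ℕ) (by omega)) h.symm),
      Finsupp.single_eq_of_ne' (fun h => (h1.U_ne_S i t i (N.L i - 1) (by omega)) h.symm)]
    rfl
  have hTS : ∀ j : Fin (N.L i), j ≠ j1 → j ≠ jl → T (N.S i (j : ℕ)) = 0 := by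
    intro j h1' h2'
    rw [hT, pairm, Finsupp.add_apply, Finsupp.add_apply,
      Finsupp.single_eq_of_ne' (y_ne_s hp i (j : ℕ) (by omega)),
      Finsupp.single_eq_of_ne' (fun h =>
        h1' (Fin.ext (h1.S_inj i (j : ℕ) (j1 : ℕ) (by omega) (by omega) h.symm))),
      Finsupp.single_eq_of_ne' (fun h => h2' (Fin.ext (by
        rw [hjlv]
        exact h1.S_inj i (j : ℕ) (N.L i - 1) (by omega) (by omega) h.symm)))]
    rfl
  show coeff T (lieD (N.rhs1 k i) (PP N k i 2)) = _
  rw [coeff_lieD_rhs1]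
  rw [← Finset.sum_subset (Finset.subset_univ ({j1, jl} : Finset (Fin (N.L i))))
    (fun j _ hj' => by
      simp only [Finset.mem_insert, Finset.mem_singleton, not_or] at hj'
      rw [if_neg (not_pairm_le (hTS j hj'.1 hj'.2)), if_neg (not_intm_le (hTU j))]
      norm_num)]
  rw [Finset.sum_pair hj1l]
  -- the `j1` term
  have hterm1 : (if N.pairm i (j1 : ℕ) ≤ T then
      k ⟨i, j1, 0⟩ * (wf (PP N k i 2) T (N.pairm i (j1 : ℕ)) (N.U i ((j1 : ℕ) + 1))
        - wf (PP N k i 2) T (N.pairm i (j1 : ℕ)) (N.Y i)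
        - wf (PP N k i 2) T (N.pairm i (j1 : ℕ)) (N.S i (j1 : ℕ))) else 0)
      = -(k ⟨i, j1, 0⟩ * (kC N k i (N.L i - 1) * kA N k i (N.L i - 1))) := by
    rw [if_pos (self_le_add_right _ _)]
    have hsub : T - N.pairm i (j1 : ℕ) = Finsupp.single (N.S i (N.L i - 1)) 1 :=
      add_tsub_cancel_left _ _
    have hwU : wf (PP N k i 2) T (N.pairm i (j1 : ℕ)) (N.U i ((j1 : ℕ) + 1)) = 0 := by
      rw [wf, hsub, coeff_PP2_sz h1 hp k i (by omega)
        (fun h => (h1.U_ne_Y i j1 i) h), mul_zero]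
    have hwY : wf (PP N k i 2) T (N.pairm i (j1 : ℕ)) (N.Y i)
        = kC N k i (N.L i - 1) * kA N k i (N.L i - 1) := by
      rw [wf, hsub, coeff_PP2_main h1 hp k i,
        Finsupp.single_eq_of_ne' (y_ne_s hp i (N.L i - 1) (by omega)).symm]
      norm_num
    have hwS : wf (PP N k i 2) T (N.pairm i (j1 : ℕ)) (N.S i (j1 : ℕ)) = 0 := by
      rw [wf, hsub, coeff_PP2_sz h1 hp k i (by omega)
        (y_ne_s hp i (j1 : ℕ) (by omega)).symm, mul_zero]
    rw [hwU, hwY, hwS]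
    ring
  -- the `jl` term
  have hterm2 : (if N.pairm i (jl : ℕ) ≤ T then
      k ⟨i, jl, 0⟩ * (wf (PP N k i 2) T (N.pairm i (jl : ℕ)) (N.U i ((jl : ℕ) + 1))
        - wf (PP N k i 2) T (N.pairm i (jl : ℕ)) (N.Y i)
        - wf (PP N k i 2) T (N.pairm i (jl : ℕ)) (N.S i (jl : ℕ))) else 0) = 0 := by
    have hdec : T = N.pairm i (jl : ℕ) + Finsupp.single (N.S i (j1 : ℕ)) 1 := by
      rw [hT, pairm, pairm, hjlv]
      abel
    rw [if_pos (by rw [hdec]; exact self_le_add_right _ _)]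
    have hsub : T - N.pairm i (jl : ℕ) = Finsupp.single (N.S i (j1 : ℕ)) 1 := by
      rw [hdec]
      exact add_tsub_cancel_left _ _
    have hwU : wf (PP N k i 2) T (N.pairm i (jl : ℕ)) (N.U i ((jl : ℕ) + 1)) = 0 := by
      rw [wf, hsub, coeff_PP2_sz h1 hp k i (by omega)
        (fun h => (h1.U_ne_Y i jl i) h), mul_zero]
    have hwY : wf (PP N k i 2) T (N.pairm i (jl : ℕ)) (N.Y i) = 0 := by
      rw [wf, hsub, coeff_PP2_sy h1 hp k i (by omega) (by omega), mul_zero]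
    have hwS : wf (PP N k i 2) T (N.pairm i (jl : ℕ)) (N.S i (jl : ℕ)) = 0 := by
      rw [wf, hsub, coeff_PP2_sz h1 hp k i (by omega)
        (y_ne_s hp i (jl : ℕ) (by omega)).symm, mul_zero]
    rw [hwU, hwY, hwS]
    ring
  rw [if_neg (not_intm_le (hTU j1)), if_neg (not_intm_le (hTU jl))]
  rw [add_zero, add_zero, hterm1, hterm2, add_zero]

end Comp

/-- The map `ψ` on rate constants is identifiable from the set of variables `T` with `D`
derivatives: whenever two positive rate vectors give the same derivatives
`x^{(ℓ)}`, `1 ≤ ℓ ≤ D`, `x ∈ T`, as polynomials, the values of `ψ` agree. -/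
def IdentifiableFrom {α : Type*} (N : A1Network σ) (ψ : (N.Param → ℝ) → α)
    (T : Set σ) (D : ℕ) : Prop :=
  ∀ k₁ k₂ : N.Param → ℝ, (∀ r, 0 < k₁ r) → (∀ r, 0 < k₂ r) →
    (∀ x ∈ T, ∀ ℓ, 1 ≤ ℓ → ℓ ≤ D → N.deriv k₁ ℓ x = N.deriv k₂ ℓ x) →
    ψ k₁ = ψ k₂

/-- **Theorem.** If a chemical reaction network satisfying Assumptions 1 and 2 consists of
the connected components indexed by `ι`, then the associated mass-action system is
identifiable from the variables corresponding to the last products `S i (L i)` of the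
components; moreover, for each component `i` derivatives of order at most
`max 2 (2 * L i - 1)` of its last product suffice. -/
theorem system_identifiable_from_last_products
    (N : A1Network σ) (h1 : N.Assumption1) (h2 : N.Assumption2) :
    ∀ k₁ k₂ : N.Param → ℝ, (∀ r, 0 < k₁ r) → (∀ r, 0 < k₂ r) →
      (∀ i : N.ι, ∀ ℓ, 1 ≤ ℓ → ℓ ≤ max 2 (2 * N.L i - 1) →
        N.deriv k₁ ℓ (N.S i (N.L i)) = N.deriv k₂ ℓ (N.S i (N.L i))) →
      k₁ = k₂ := by
  intro k₁ k₂ hk₁ hk₂ hyp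
  obtain ⟨part, hp⟩ := h2
  funext r
  obtain ⟨i, j, c3⟩ := r
  have hL := N.Lpos i
  -- transfer of coefficient data to the single-component system
  have key : ∀ T : σ →₀ ℕ, (∀ x ∈ T.support, x ∈ N.CV i) → ∀ ℓ, 1 ≤ ℓ →
      ℓ ≤ max 2 (2 * N.L i - 1) → coeff T (PP N k₁ i ℓ) = coeff T (PP N k₂ i ℓ) := by
    intro T hT ℓ hℓ1 hℓ2
    rw [PP, PP, ← reduction h1 hp k₁ i ℓ _ T hT, ← reduction h1 hp k₂ i ℓ _ T hT]
    exact congrArg (coeff T) (hyp i ℓ hℓ1 hℓ2)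
  have hYCV : N.Y i ∈ N.CV i := Or.inl rfl
  have hSCV : ∀ q ≤ N.L i, N.S i q ∈ N.CV i := fun q hq => Or.inr (Or.inl ⟨q, hq, rfl⟩)
  have hUCV : ∀ t, t < N.L i → N.U i (t + 1) ∈ N.CV i :=
    fun t ht => Or.inr (Or.inr ⟨⟨t, ht⟩, rfl⟩)
  -- positivity
  have hposA : ∀ (k : N.Param → ℝ), (∀ p, 0 < k p) → ∀ t, 0 < kA N k i t := by
    intro k hk t
    rw [kA]
    split_ifs
    · exact hk _
    · norm_num
  have hposB : ∀ (k : N.Param → ℝ), (∀ p, 0 < k p) → ∀ t, 0 < kB N k i t := by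
    intro k hk t
    rw [kB]
    split_ifs
    · exact hk _
    · norm_num
  have hposC : ∀ (k : N.Param → ℝ), (∀ p, 0 < k p) → ∀ t, 0 < kC N k i t := by
    intro k hk t
    rw [kC]
    split_ifs
    · exact hk _
    · norm_num
  have hposg : ∀ (k : N.Param → ℝ), (∀ p, 0 < k p) → ∀ r, 0 < gam N k i r := by
    intro k hk r
    induction r with
    | zero => rw [gam]; exact hposC k hk _
    | succ r ih =>
      rw [gam]
      exact mul_pos (mul_pos ih (hposA k hk _)) (hposC k hk _)
  -- γ-chain equalities
  have hgam : ∀ r, r < N.L i → gam N k₁ i r = gam N k₂ i r := by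
    intro r hr
    have e₁ := (AB_chain h1 hp k₁ i r hr).1
    have e₂ := (AB_chain h1 hp k₂ i r hr).1
    rw [← e₁, ← e₂]
    refine key _ ?_ (2 * r + 1) (by omega) (le_max_of_le_right (by omega))
    exact supp_add_CV (supp_single_CV hYCV r)
      (supp_single_CV (hUCV (N.L i - 1 - r) (by omega)) 1)
  -- c at the last block
  have eClast : kC N k₁ i (N.L i - 1) = kC N k₂ i (N.L i - 1) := by
    have := hgam 0 (by omega)
    rwa [gam, gam] at this
  -- a at the last block
  have eAlast : kA N k₁ i (N.L i - 1) = kA N k₂ i (N.L i - 1) := by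
    have e₁ := (AB_chain h1 hp k₁ i 0 (by omega)).2
    have e₂ := (AB_chain h1 hp k₂ i 0 (by omega)).2
    have ekey : coeff (TB N i 0) (PP N k₁ i 2) = coeff (TB N i 0) (PP N k₂ i 2) := by
      refine key _ ?_ 2 (by omega) (le_max_left _ _)
      exact supp_add_CV (supp_single_CV hYCV 1)
        (supp_single_CV (hSCV (N.L i - 1 - 0) (by omega)) 1)
    rw [e₁, e₂, Nat.sub_zero, hgam 0 (by omega)] at ekey
    exact mul_left_cancel₀ (ne_of_gt (hposg k₂ hk₂ 0)) ekey
  -- all a's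
  have eA : ∀ jj : Fin (N.L i), k₁ ⟨i, jj, 0⟩ = k₂ ⟨i, jj, 0⟩ := by
    intro jj
    by_cases hjj : (jj : ℕ) = N.L i - 1
    · rw [← kA_eq k₁ i jj, ← kA_eq k₂ i jj, hjj]
      exact eAlast
    · have hj2 : (jj : ℕ) + 2 ≤ N.L i := by have := jj.2; omega
      have e₁ := coeff_P3_P h1 hp k₁ i jj hj2
      have e₂ := coeff_P3_P h1 hp k₂ i jj hj2
      have ekey := key (N.pairm i (jj : ℕ) + Finsupp.single (N.S i (N.L i - 1)) 1)
        (supp_add_CV (supp_add_CV (supp_single_CV hYCV 1)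
            (supp_single_CV (hSCV (jj : ℕ) (by omega)) 1))
          (supp_single_CV (hSCV (N.L i - 1) (by omega)) 1))
        3 (by omega) (le_max_of_le_right (by omega))
      rw [e₁, e₂, eClast, eAlast, neg_inj] at ekey
      exact mul_right_cancel₀
        (ne_of_gt (mul_pos (hposC k₂ hk₂ _) (hposA k₂ hk₂ _))) ekey
  have eAn : ∀ t, t < N.L i → kA N k₁ i t = kA N k₂ i t := by
    intro t ht
    rw [show t = ((⟨t, ht⟩ : Fin (N.L i)) : ℕ) from rfl, kA_eq, kA_eq]
    exact eA _
  -- all c's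
  have eCn : ∀ t, t < N.L i → kC N k₁ i t = kC N k₂ i t := by
    intro t ht
    by_cases hjj : t = N.L i - 1
    · rw [hjj]; exact eClast
    · have hr : (N.L i - 2 - t) + 1 < N.L i := by omega
      have := hgam ((N.L i - 2 - t) + 1) hr
      rw [gam, gam, hgam _ (by omega : N.L i - 2 - t < N.L i),
        eAn _ (by omega), show N.L i - 2 - (N.L i - 2 - t) = t from by omega] at this
      exact mul_left_cancel₀ (ne_of_gt
        (mul_pos (hposg k₂ hk₂ _) (hposA k₂ hk₂ _))) this
  have eC : ∀ jj : Fin (N.L i), k₁ ⟨i, jj, 2⟩ = k₂ ⟨i, jj, 2⟩ := by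
    intro jj
    rw [← kC_eq k₁ i jj, ← kC_eq k₂ i jj]
    exact eCn _ jj.2
  -- all b's
  have eBC : ∀ jj : Fin (N.L i),
      k₁ ⟨i, jj, 1⟩ + k₁ ⟨i, jj, 2⟩ = k₂ ⟨i, jj, 1⟩ + k₂ ⟨i, jj, 2⟩ := by
    intro jj
    by_cases hjj : (jj : ℕ) = N.L i - 1
    · -- use the order-2 coefficient of the intermediate monomial
      have e₁ := coeff_PP2_intm h1 hp k₁ i
      have e₂ := coeff_PP2_intm h1 hp k₂ i
      have ekey := key (N.intm i (N.L i))
        (supp_single_CV (by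
          rw [show N.L i = (N.L i - 1) + 1 from by omega]
          exact hUCV (N.L i - 1) (by omega)) 1)
        2 (by omega) (le_max_left _ _)
      rw [e₁, e₂, eClast, neg_inj] at ekey
      have hsum := mul_left_cancel₀ (ne_of_gt (hposC k₂ hk₂ _)) ekey
      rw [← kB_eq k₁ i jj, ← kB_eq k₂ i jj, ← kC_eq k₁ i jj, ← kC_eq k₂ i jj, hjj]
      linarith [eClast]
    · have hj2 : (jj : ℕ) + 2 ≤ N.L i := by have := jj.2; omega
      have e₁ := coeff_P3_Q h1 hp k₁ i jj
      have e₂ := coeff_P3_Q h1 hp k₂ i jj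
      have ekey := key (N.intm i ((jj : ℕ) + 1) + Finsupp.single (N.S i (N.L i - 1)) 1)
        (supp_add_CV (supp_single_CV (hUCV (jj : ℕ) jj.2) 1)
          (supp_single_CV (hSCV (N.L i - 1) (by omega)) 1))
        3 (by omega) (le_max_of_le_right (by omega))
      rw [e₁, e₂, eClast, eAlast] at ekey
      exact mul_right_cancel₀
        (ne_of_gt (mul_pos (hposC k₂ hk₂ _) (hposA k₂ hk₂ _))) ekey
  have eB : ∀ jj : Fin (N.L i), k₁ ⟨i, jj, 1⟩ = k₂ ⟨i, jj, 1⟩ := by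
    intro jj
    have h₁ := eBC jj
    have h₂ := eC jj
    linarith
  -- conclude
  fin_cases c3
  · exact eA j
  · exact eB j
  · exact eC j

end A1Network
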